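/- arXiv:1810.12048 — 3 statements merged into one kernel-verified Lean document; each statement's English description precedes it below -/
import Mathlib

section
/- For all nonnegative integers L and M and every complex number q with 0<|q|<1, the following identity holds: Σ_{m≥0, m≡L (mod 2)} q^{m²} · [3M choose m]_{q²} · [2M+(L−m)/2 choose 2M]_{q⁶} = Σ_{j∈ℤ} q^{3j²+2j} · T(L, M; j, j; q⁶), where the sum over j is finite since the refined q-trinomial coefficient vanishes for |j| large. -/
open Finset

noncomputable section

/-- The finite q-Pochhammer symbol `(a;q)_n`. -/
def qPoch (a q : ℂ) (n : ℕ) : ℂ := ∏ k ∈ Finset.range n, (1 - a * q ^ k)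

/-- The infinite q-Pochhammer symbol `(a;q)_∞`. -/
def qPochInf (a q : ℂ) : ℂ := ∏' k : ℕ, (1 - a * q ^ k)

/-- The Gaussian binomial coefficient `[N choose k]_q`, zero unless `0 ≤ k ≤ N`. -/
def qBinom (q : ℂ) (N k : ℤ) : ℂ :=
  if 0 ≤ k ∧ k ≤ N then qPoch q q N.toNat / (qPoch q q k.toNat * qPoch q q (N - k).toNat)
  else 0

/-- `1/(a;q)_k`, with the convention that it is `0` for `k < 0`. -/
def invPoch (a q : ℂ) (k : ℤ) : ℂ := if 0 ≤ k then (qPoch a q k.toNat)⁻¹ else 0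

/-- Warnaar's refined q-trinomial coefficient `T(L, M; a, b; q)`, where `z` is a fixed
square root of `q`, so that `q^(n²/2) = z^(n²)`. -/
def Twar (z q : ℂ) (L M a b : ℤ) : ℂ :=
  ∑' n : ℕ, if (L - a - (n : ℤ)) % 2 = 0 then
    z ^ (n ^ 2) * qBinom q M (n : ℤ) * qBinom q (M + b + (L - a - (n : ℤ)) / 2) (M + b) *
      qBinom q (M - b + (L + a - (n : ℤ)) / 2) (M - b)
  else 0

/-- Warnaar's refined q-trinomial coefficient `S(L, M; a, b; q)`. -/
def Swar (q : ℂ) (L M a b : ℤ) : ℂ :=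
  ∑' n : ℕ, q ^ ((n : ℤ) * ((n : ℤ) + a)) * qBinom q (M + L - a - 2 * (n : ℤ)) M *
    qBinom q (M - a + b) (n : ℤ) * qBinom q (M + a - b) ((n : ℤ) + a)

/-- The Andrews–Baxter q-trinomial coefficient `(L, b; a; q)₂`. -/
def roundTri (q : ℂ) (L : ℕ) (b a : ℤ) : ℂ :=
  ∑' n : ℕ, q ^ ((n : ℤ) * ((n : ℤ) + b)) * qPoch q q L * invPoch q q (n : ℤ) *
    invPoch q q ((n : ℤ) + a) * invPoch q q ((L : ℤ) - 2 * (n : ℤ) - a)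

/-- The Andrews–Baxter q-trinomial `T₀(L; a; q) = q^((L²-a²)/2) (L,a;a;1/q)₂`, where `z`
is a fixed square root of `q`, so that `q^((L²-a²)/2) = z^(L²-a²)`. -/
def T0 (z q : ℂ) (L : ℕ) (a : ℤ) : ℂ := z ^ ((L : ℤ) ^ 2 - a ^ 2) * roundTri q⁻¹ L a a

/-- The partial sum `N_k = n_k + n_(k+1) + ... + n_ν` (0-indexed). -/
def Nsum {ν : ℕ} (n : Fin ν → ℕ) (k : Fin ν) : ℕ := ∑ l : Fin ν, if k ≤ l then n l else 0

end

noncomputable section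

namespace St0

variable {b : ℂ}

lemma qPoch_succ (a q : ℂ) (n : ℕ) : qPoch a q (n+1) = qPoch a q n * (1 - a * q ^ n) :=
  Finset.prod_range_succ _ _

lemma qPoch_zero (a q : ℂ) : qPoch a q 0 = 1 := rfl

lemma qPoch_ne_zero (hb : ‖b‖ < 1) (n : ℕ) : qPoch b b n ≠ 0 := by
  rw [qPoch]
  apply Finset.prod_ne_zero_iff.mpr
  intro k _ h
  have hb1 : b ^ (k+1) = 1 := by
    have : b * b ^ k = 1 := by linear_combination -h
    rw [pow_succ']
    exact this
  have := congrArg (‖·‖) hb1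
  rw [norm_pow, norm_one] at this
  have hlt : (‖b‖) ^ (k+1) < 1 :=
    pow_lt_one₀ (norm_nonneg b) hb (Nat.succ_ne_zero k)
  rw [this] at hlt
  exact lt_irrefl 1 hlt

lemma qBinom_eq_zero_of_lt {N k : ℤ} (h : N < k) : qBinom b N k = 0 := by
  rw [qBinom, if_neg]; omega

lemma qBinom_eq_zero_of_neg {N k : ℤ} (h : k < 0) : qBinom b N k = 0 := by
  rw [qBinom, if_neg]; omega

lemma qBinom_zero_right (hb : ‖b‖ < 1) {N : ℤ} (hN : 0 ≤ N) :
    qBinom b N 0 = 1 := by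
  rw [qBinom, if_pos ⟨le_refl 0, hN⟩]
  simp only [Int.toNat_zero, qPoch_zero, one_mul, sub_zero]
  exact div_self (qPoch_ne_zero hb _)

lemma qBinom_self (hb : ‖b‖ < 1) {N : ℤ} (hN : 0 ≤ N) :
    qBinom b N N = 1 := by
  rw [qBinom, if_pos ⟨hN, le_refl N⟩, sub_self]
  simp only [Int.toNat_zero, qPoch_zero, mul_one]
  exact div_self (qPoch_ne_zero hb _)

lemma qBinom_symm (N k : ℤ) : qBinom b N k = qBinom b N (N - k) := by
  rw [qBinom, qBinom]
  by_cases h : 0 ≤ k ∧ k ≤ N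
  · rw [if_pos h, if_pos (by omega : 0 ≤ N - k ∧ N - k ≤ N)]
    rw [show N - (N - k) = k by ring]
    rw [mul_comm]
  · rw [if_neg h, if_neg (by omega)]

lemma pascal_aux (hb : ‖b‖ < 1) (j d : ℕ) :
    qPoch b b (j+1+d+1) / (qPoch b b (j+1) * qPoch b b (d+1)) =
    qPoch b b (j+1+d) / (qPoch b b (j+1) * qPoch b b d) +
    b^(d+1) * (qPoch b b (j+1+d) / (qPoch b b j * qPoch b b (d+1))) := by
  have e1 : qPoch b b (j+1+d+1) = qPoch b b (j+1+d) * (1 - b ^ (j+1+d+1)) := by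
    rw [qPoch_succ, pow_succ']
  have e2 : qPoch b b (j+1) = qPoch b b j * (1 - b ^ (j+1)) := by
    rw [qPoch_succ, pow_succ']
  have e3 : qPoch b b (d+1) = qPoch b b d * (1 - b ^ (d+1)) := by
    rw [qPoch_succ, pow_succ']
  have n1 : qPoch b b j ≠ 0 := qPoch_ne_zero hb j
  have n2 : qPoch b b d ≠ 0 := qPoch_ne_zero hb d
  have n3 : (1 : ℂ) - b ^ (j+1) ≠ 0 := by
    have := qPoch_ne_zero hb (j+1)
    rw [e2] at this
    exact fun h => this (by rw [h, mul_zero])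
  have n4 : (1 : ℂ) - b ^ (d+1) ≠ 0 := by
    have := qPoch_ne_zero hb (d+1)
    rw [e3] at this
    exact fun h => this (by rw [h, mul_zero])
  rw [e1, e2, e3]
  field_simp
  ring

lemma qBinom_pascal (hb0 : b ≠ 0) (hb : ‖b‖ < 1) (N k : ℤ) (hN : 1 ≤ N) :
    qBinom b N k = qBinom b (N-1) k + b ^ (N - k) * qBinom b (N-1) (k-1) := by
  by_cases h0 : 0 ≤ k ∧ k ≤ N
  · by_cases hk0 : k = 0
    · subst hk0
      rw [qBinom_zero_right hb (by omega), qBinom_zero_right hb (by omega),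
        qBinom_eq_zero_of_neg (by omega : (0:ℤ)-1 < 0), mul_zero, add_zero]
    · by_cases hkN : k = N
      · rw [hkN]
        rw [qBinom_self hb (by omega), qBinom_eq_zero_of_lt (by omega : N - 1 < N),
          sub_self, zpow_zero, one_mul, qBinom_self hb (by omega), zero_add]
      · -- 1 ≤ k ≤ N - 1
        obtain ⟨j, hj⟩ : ∃ j : ℕ, (j : ℤ) = k - 1 := ⟨(k-1).toNat, by omega⟩
        obtain ⟨d, hd⟩ : ∃ d : ℕ, (d : ℤ) = N - k - 1 := ⟨(N-k-1).toNat, by omega⟩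
        rw [qBinom, qBinom, qBinom, if_pos h0, if_pos (by omega), if_pos (by omega)]
        rw [show N.toNat = j+1+d+1 by omega, show k.toNat = j+1 by omega,
          show (N-k).toNat = d+1 by omega, show (N-1).toNat = j+1+d by omega,
          show (N-1-k).toNat = d by omega, show (k-1).toNat = j by omega,
          show (N-1-(k-1)).toNat = d+1 by omega,
          show N - k = ((d+1 : ℕ) : ℤ) by omega, zpow_natCast]
        exact pascal_aux hb j d
  · rw [qBinom, if_neg h0, qBinom, qBinom, if_neg (by omega), if_neg (by omega),
      mul_zero, add_zero]

end St0

namespace St0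

open PowerSeries

variable {q : ℂ}

lemma habsQ (hq1 : ‖q‖ < 1) : ‖q^6‖ < 1 := by
  rw [norm_pow]
  exact pow_lt_one₀ (norm_nonneg q) hq1 (by norm_num)

lemma habsQ2 (hq1 : ‖q‖ < 1) : ‖q^2‖ < 1 := by
  rw [norm_pow]
  exact pow_lt_one₀ (norm_nonneg q) hq1 (by norm_num)

/-- weight `q^(3j²+2j)` -/
noncomputable def wpow (q : ℂ) (j : ℤ) : ℂ := q ^ (3*j^2 + 2*j)

noncomputable def gfun (q : ℂ) (M1 M2 N : ℕ) : ℂ :=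
  ∑ r ∈ Finset.range (N+1),
    wpow q ((N:ℤ) - 2*r) * qBinom (q^6) ((M1:ℤ) + ((N:ℤ) - r)) (r:ℤ)
      * qBinom (q^6) ((M2:ℤ) + (r:ℤ)) ((N:ℤ) - r)

lemma Qzpow_eq (hq0 : q ≠ 0) (e : ℤ) : (q^6) ^ e = q ^ (6*e) := by
  rw [← zpow_natCast q 6, ← zpow_mul]
  norm_num

lemma gfun_zero (hq1 : ‖q‖ < 1) (M1 M2 : ℕ) : gfun q M1 M2 0 = 1 := by
  rw [gfun, Finset.sum_range_one]
  norm_num [wpow]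
  rw [qBinom_zero_right (habsQ hq1) (by positivity),
    qBinom_zero_right (habsQ hq1) (by positivity)]
  norm_num

lemma wshift_down (hq0 : q ≠ 0) (M1 : ℕ) (j : ℤ) :
    wpow q (j-1) * (q^6)^((M1:ℤ)+j) = q^(6*M1+1) * wpow q j := by
  rw [wpow, wpow, Qzpow_eq hq0, ← zpow_add₀ hq0,
    show (q:ℂ)^(6*M1+1) = q ^ ((6*M1+1 : ℕ) : ℤ) from (zpow_natCast q _).symm,
    ← zpow_add₀ hq0]
  congr 1
  push_cast
  ring

lemma wshift_up (hq0 : q ≠ 0) (M2 : ℕ) (j : ℤ) :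
    wpow q (j+1) * (q^6)^((M2:ℤ)-j) = q^(6*M2+5) * wpow q j := by
  rw [wpow, wpow, Qzpow_eq hq0, ← zpow_add₀ hq0,
    show (q:ℂ)^(6*M2+5) = q ^ ((6*M2+5 : ℕ) : ℤ) from (zpow_natCast q _).symm,
    ← zpow_add₀ hq0]
  congr 1
  push_cast
  ring

lemma Ra (hq0 : q ≠ 0) (hq1 : ‖q‖ < 1) (M1 M2 N : ℕ) :
    gfun q (M1+1) M2 (N+1) = gfun q M1 M2 (N+1) + q^(6*M1+1) * gfun q M1 (M2+1) N := by
  have hQ0 : (q:ℂ)^6 ≠ 0 := pow_ne_zero _ hq0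
  have hQ1 := habsQ hq1
  rw [gfun]
  have split : ∀ r ∈ Finset.range (N+1+1),
      wpow q (((N+1:ℕ):ℤ) - 2*r) * qBinom (q^6) (((M1+1:ℕ):ℤ) + (((N+1:ℕ):ℤ) - r)) (r:ℤ)
        * qBinom (q^6) (((M2:ℕ):ℤ) + (r:ℤ)) (((N+1:ℕ):ℤ) - r)
      = (wpow q (((N+1:ℕ):ℤ) - 2*r) * qBinom (q^6) ((M1:ℤ) + (((N+1:ℕ):ℤ) - r)) (r:ℤ)
          * qBinom (q^6) ((M2:ℤ) + (r:ℤ)) (((N+1:ℕ):ℤ) - r))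
        + (wpow q (((N+1:ℕ):ℤ) - 2*r) * ((q^6)^((M1:ℤ)+1+((N:ℤ)+1)-2*r)
            * qBinom (q^6) ((M1:ℤ) + (((N+1:ℕ):ℤ) - r)) ((r:ℤ)-1))
          * qBinom (q^6) ((M2:ℤ) + (r:ℤ)) (((N+1:ℕ):ℤ) - r)) := by
    intro r hr
    simp only [Finset.mem_range] at hr
    rw [qBinom_pascal hQ0 hQ1 (((M1+1:ℕ):ℤ) + (((N+1:ℕ):ℤ) - r)) (r:ℤ) (by push_cast; omega)]
    rw [show (((M1+1:ℕ):ℤ) + (((N+1:ℕ):ℤ) - r)) - 1 = (M1:ℤ) + (((N+1:ℕ):ℤ) - r) by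
      push_cast; ring]
    rw [show (((M1+1:ℕ):ℤ) + (((N+1:ℕ):ℤ) - r)) - r = (M1:ℤ)+1+((N:ℤ)+1)-2*r by
      push_cast; ring]
    ring
  rw [Finset.sum_congr rfl split, Finset.sum_add_distrib]
  congr 1
  rw [Finset.sum_range_succ']
  have hzero : wpow q (((N+1:ℕ):ℤ) - 2*(0:ℕ)) * ((q^6)^((M1:ℤ)+1+((N:ℤ)+1)-2*(0:ℕ))
      * qBinom (q^6) ((M1:ℤ) + (((N+1:ℕ):ℤ) - (0:ℕ))) (((0:ℕ):ℤ)-1))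
      * qBinom (q^6) ((M2:ℤ) + ((0:ℕ):ℤ)) (((N+1:ℕ):ℤ) - (0:ℕ)) = 0 := by
    rw [qBinom_eq_zero_of_neg (by norm_num)]
    ring
  rw [hzero, add_zero, gfun, Finset.mul_sum]
  apply Finset.sum_congr rfl
  intro i hi
  have e1 : (M1:ℤ) + (((N+1:ℕ):ℤ) - ((i+1:ℕ):ℤ)) = (M1:ℤ) + ((N:ℤ) - i) := by
    push_cast; ring
  have e2 : ((i+1:ℕ):ℤ) - 1 = (i:ℤ) := by push_cast; ring
  have e3 : (M2:ℤ) + ((i+1:ℕ):ℤ) = ((M2+1:ℕ):ℤ) + (i:ℤ) := by push_cast; ring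
  have e4 : (((N+1:ℕ):ℤ) - ((i+1:ℕ):ℤ)) = (N:ℤ) - i := by push_cast; ring
  rw [e1, e2, e3, e4]
  have e5 : (((N+1:ℕ):ℤ) - 2*((i+1:ℕ):ℤ)) = ((N:ℤ) - 2*i) - 1 := by push_cast; ring
  have e6 : ((M1:ℤ)+1+((N:ℤ)+1)-2*((i+1:ℕ):ℤ)) = (M1:ℤ) + ((N:ℤ) - 2*i) := by
    push_cast; ring
  rw [e5, e6]
  have := wshift_down hq0 M1 ((N:ℤ) - 2*i)
  calc wpow q ((N:ℤ) - 2*i - 1) * ((q^6)^((M1:ℤ) + ((N:ℤ) - 2*i))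
          * qBinom (q^6) ((M1:ℤ) + ((N:ℤ) - i)) (i:ℤ))
        * qBinom (q^6) (((M2+1:ℕ):ℤ) + (i:ℤ)) ((N:ℤ) - i)
      = (wpow q ((N:ℤ) - 2*i - 1) * (q^6)^((M1:ℤ) + ((N:ℤ) - 2*i)))
        * (qBinom (q^6) ((M1:ℤ) + ((N:ℤ) - i)) (i:ℤ)
          * qBinom (q^6) (((M2+1:ℕ):ℤ) + (i:ℤ)) ((N:ℤ) - i)) := by ring
    _ = (q^(6*M1+1) * wpow q ((N:ℤ) - 2*i))
        * (qBinom (q^6) ((M1:ℤ) + ((N:ℤ) - i)) (i:ℤ)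
          * qBinom (q^6) (((M2+1:ℕ):ℤ) + (i:ℤ)) ((N:ℤ) - i)) := by
      rw [show (N:ℤ) - 2*i - 1 = ((N:ℤ) - 2*i) - 1 by ring, this]
    _ = q^(6*M1+1) * (wpow q ((N:ℤ) - 2*↑i) * qBinom (q^6) ((M1:ℤ) + ((N:ℤ) - i)) (i:ℤ)
          * qBinom (q^6) (((M2+1:ℕ):ℤ) + (i:ℤ)) ((N:ℤ) - i)) := by ring

lemma Rb (hq0 : q ≠ 0) (hq1 : ‖q‖ < 1) (M1 M2 N : ℕ) :
    gfun q M1 (M2+1) (N+1) = gfun q M1 M2 (N+1) + q^(6*M2+5) * gfun q (M1+1) M2 N := by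
  have hQ0 : (q:ℂ)^6 ≠ 0 := pow_ne_zero _ hq0
  have hQ1 := habsQ hq1
  rw [gfun]
  have split : ∀ r ∈ Finset.range (N+1+1),
      wpow q (((N+1:ℕ):ℤ) - 2*r) * qBinom (q^6) ((M1:ℤ) + (((N+1:ℕ):ℤ) - r)) (r:ℤ)
        * qBinom (q^6) (((M2+1:ℕ):ℤ) + (r:ℤ)) (((N+1:ℕ):ℤ) - r)
      = (wpow q (((N+1:ℕ):ℤ) - 2*r) * qBinom (q^6) ((M1:ℤ) + (((N+1:ℕ):ℤ) - r)) (r:ℤ)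
          * qBinom (q^6) ((M2:ℤ) + (r:ℤ)) (((N+1:ℕ):ℤ) - r))
        + (wpow q (((N+1:ℕ):ℤ) - 2*r) * qBinom (q^6) ((M1:ℤ) + (((N+1:ℕ):ℤ) - r)) (r:ℤ)
            * ((q^6)^((M2:ℤ)+2*r-(N:ℤ))
          * qBinom (q^6) ((M2:ℤ) + (r:ℤ)) ((N:ℤ) - r))) := by
    intro r hr
    simp only [Finset.mem_range] at hr
    rw [qBinom_pascal hQ0 hQ1 (((M2+1:ℕ):ℤ) + (r:ℤ)) (((N+1:ℕ):ℤ) - r) (by push_cast; omega)]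
    rw [show (((M2+1:ℕ):ℤ) + (r:ℤ)) - 1 = (M2:ℤ) + (r:ℤ) by push_cast; ring]
    rw [show (((M2+1:ℕ):ℤ) + (r:ℤ)) - (((N+1:ℕ):ℤ) - r) = (M2:ℤ)+2*r-(N:ℤ) by
      push_cast; ring]
    rw [show (((N+1:ℕ):ℤ) - r) - 1 = (N:ℤ) - r by push_cast; ring]
    ring
  rw [Finset.sum_congr rfl split, Finset.sum_add_distrib]
  congr 1
  rw [Finset.sum_range_succ]
  have hzero : wpow q (((N+1:ℕ):ℤ) - 2*((N+1:ℕ):ℤ))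
      * qBinom (q^6) ((M1:ℤ) + (((N+1:ℕ):ℤ) - ((N+1:ℕ):ℤ))) ((N+1:ℕ):ℤ)
      * ((q^6)^((M2:ℤ)+2*((N+1:ℕ):ℤ)-(N:ℤ))
        * qBinom (q^6) ((M2:ℤ) + ((N+1:ℕ):ℤ)) ((N:ℤ) - ((N+1:ℕ):ℤ))) = 0 := by
    rw [qBinom_eq_zero_of_neg (k := (N:ℤ) - ((N+1:ℕ):ℤ)) (by push_cast; omega)]
    ring
  rw [hzero, add_zero, gfun, Finset.mul_sum]
  apply Finset.sum_congr rfl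
  intro i hi
  have e1 : (M1:ℤ) + (((N+1:ℕ):ℤ) - (i:ℤ)) = ((M1+1:ℕ):ℤ) + ((N:ℤ) - i) := by
    push_cast; ring
  rw [e1]
  have e5 : (((N+1:ℕ):ℤ) - 2*(i:ℤ)) = ((N:ℤ) - 2*i) + 1 := by push_cast; ring
  have e6 : ((M2:ℤ)+2*(i:ℤ)-(N:ℤ)) = (M2:ℤ) - ((N:ℤ) - 2*i) := by push_cast; ring
  rw [e5, e6]
  have := wshift_up hq0 M2 ((N:ℤ) - 2*i)
  calc wpow q ((N:ℤ) - 2*i + 1) * qBinom (q^6) (((M1+1:ℕ):ℤ) + ((N:ℤ) - i)) (i:ℤ)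
        * ((q^6)^((M2:ℤ) - ((N:ℤ) - 2*i)) * qBinom (q^6) ((M2:ℤ) + (i:ℤ)) ((N:ℤ) - i))
      = (wpow q ((N:ℤ) - 2*i + 1) * (q^6)^((M2:ℤ) - ((N:ℤ) - 2*i)))
        * (qBinom (q^6) (((M1+1:ℕ):ℤ) + ((N:ℤ) - i)) (i:ℤ)
          * qBinom (q^6) ((M2:ℤ) + (i:ℤ)) ((N:ℤ) - i)) := by ring
    _ = (q^(6*M2+5) * wpow q ((N:ℤ) - 2*i))
        * (qBinom (q^6) (((M1+1:ℕ):ℤ) + ((N:ℤ) - i)) (i:ℤ)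
          * qBinom (q^6) ((M2:ℤ) + (i:ℤ)) ((N:ℤ) - i)) := by
      rw [show (N:ℤ) - 2*i + 1 = ((N:ℤ) - 2*i) + 1 by ring, this]
    _ = q^(6*M2+5) * (wpow q ((N:ℤ) - 2*↑i) * qBinom (q^6) (((M1+1:ℕ):ℤ) + ((N:ℤ) - i)) (i:ℤ)
          * qBinom (q^6) ((M2:ℤ) + (i:ℤ)) ((N:ℤ) - i)) := by ring

end St0

namespace St0

open PowerSeries

variable {q : ℂ}

noncomputable def Gser (q : ℂ) (M1 M2 : ℕ) : PowerSeries ℂ := PowerSeries.mk (gfun q M1 M2)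

lemma coeff_mk_mul (f g : ℕ → ℂ) (L : ℕ) :
    (PowerSeries.coeff L) (PowerSeries.mk f * PowerSeries.mk g)
      = ∑ i ∈ Finset.range (L+1), f i * g (L - i) := by
  rw [PowerSeries.coeff_mul, Finset.Nat.sum_antidiagonal_eq_sum_range_succ_mk]
  simp [PowerSeries.coeff_mk]

lemma coeff_C_mul_X_mul (f : ℕ → ℂ) (e : ℂ) (n : ℕ) :
    (PowerSeries.coeff n) (PowerSeries.C e * (PowerSeries.X * PowerSeries.mk f)) =
      e * (if 1 ≤ n then f (n-1) else 0) := by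
  rw [PowerSeries.coeff_C_mul]
  cases n with
  | zero => rw [PowerSeries.coeff_zero_X_mul]; simp
  | succ m => rw [PowerSeries.coeff_succ_X_mul, PowerSeries.coeff_mk]; simp

lemma RaS (hq0 : q ≠ 0) (hq1 : ‖q‖ < 1) (M1 M2 : ℕ) :
    Gser q (M1+1) M2 = Gser q M1 M2 + (C q)^(6*M1+1) * (X * Gser q M1 (M2+1)) := by
  rw [← map_pow]
  ext N
  rw [map_add, Gser, Gser, Gser, PowerSeries.coeff_mk, PowerSeries.coeff_mk,
    coeff_C_mul_X_mul]
  cases N with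
  | zero => simp [gfun_zero hq1]
  | succ n =>
    rw [Ra hq0 hq1 M1 M2 n]
    simp

lemma RbS (hq0 : q ≠ 0) (hq1 : ‖q‖ < 1) (M1 M2 : ℕ) :
    Gser q M1 (M2+1) = Gser q M1 M2 + (C q)^(6*M2+5) * (X * Gser q (M1+1) M2) := by
  rw [← map_pow]
  ext N
  rw [map_add, Gser, Gser, Gser, PowerSeries.coeff_mk, PowerSeries.coeff_mk,
    coeff_C_mul_X_mul]
  cases N with
  | zero => simp [gfun_zero hq1]
  | succ n =>
    rw [Rb hq0 hq1 M1 M2 n]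
    simp

lemma SaS (hq0 : q ≠ 0) (hq1 : ‖q‖ < 1) (M1 M2 : ℕ) :
    Gser q (M1+1) M2 * (1 - (C q)^(6*(M1+M2)+6) * X^2)
      = (1 + (C q)^(6*M1+1) * X) * Gser q M1 M2 := by
  have ra := RaS hq0 hq1 M1 M2
  have rb := RbS hq0 hq1 M1 M2
  linear_combination ra + (C q)^(6*M1+1) * X * rb

lemma SbS (hq0 : q ≠ 0) (hq1 : ‖q‖ < 1) (M1 M2 : ℕ) :
    Gser q M1 (M2+1) * (1 - (C q)^(6*(M1+M2)+6) * X^2)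
      = (1 + (C q)^(6*M2+5) * X) * Gser q M1 M2 := by
  have ra := RaS hq0 hq1 M1 M2
  have rb := RbS hq0 hq1 M1 M2
  linear_combination rb + (C q)^(6*M2+5) * X * ra

noncomputable def evf : ℕ → ℂ := fun n => if Even n then 1 else 0

lemma mk_ev : (PowerSeries.mk evf : PowerSeries ℂ) * (1 - X^2) = 1 := by
  ext N
  rw [mul_sub, mul_one, map_sub, PowerSeries.coeff_mk, PowerSeries.coeff_mul_X_pow',
    PowerSeries.coeff_one]
  rcases N with _ | _ | n
  · simp [evf]
  · simp [evf]
  · have h2 : 2 ≤ n + 1 + 1 := by omega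
    rw [if_pos h2, show n + 1 + 1 - 2 = n by omega, PowerSeries.coeff_mk]
    have : Even (n+1+1) ↔ Even n := by
      constructor
      · intro h; rcases h with ⟨c, hc⟩; exact ⟨c-1, by omega⟩
      · intro h; rcases h with ⟨c, hc⟩; exact ⟨c+1, by omega⟩
    rw [evf, evf]
    by_cases hn : Even n
    · rw [if_pos hn, if_pos (this.mpr hn), if_neg (by omega)]
      ring
    · rw [if_neg hn, if_neg (fun h => hn (this.mp h)), if_neg (by omega)]
      ring

lemma gfun_00 (hq1 : ‖q‖ < 1) (N : ℕ) : gfun q 0 0 N = evf N := by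
  rw [gfun, evf]
  by_cases hN : Even N
  · obtain ⟨c, hc⟩ := hN
    rw [if_pos ⟨c, hc⟩]
    rw [Finset.sum_eq_single_of_mem c (by simp [Finset.mem_range]; omega)]
    · rw [show ((N:ℤ) - 2*(c:ℕ)) = 0 by omega, show ((0:ℕ):ℤ) + ((N:ℤ) - (c:ℕ)) = (c:ℤ) by omega,
        show ((0:ℕ):ℤ) + ((c:ℕ):ℤ) = (c:ℤ) by omega, show ((N:ℤ) - (c:ℕ)) = (c:ℤ) by omega]
      rw [qBinom_self (habsQ hq1) (by positivity), wpow]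
      norm_num
    · intro r hr hrc
      rcases lt_or_gt_of_ne (fun h : (r:ℤ) = (c:ℤ) => hrc (by exact_mod_cast h)) with h | h
      · rw [qBinom_eq_zero_of_lt (show ((0:ℕ):ℤ) + (r:ℤ) < (N:ℤ) - r by push_cast; omega)]
        ring
      · rw [qBinom_eq_zero_of_lt (show ((0:ℕ):ℤ) + ((N:ℤ) - r) < (r:ℤ) by push_cast; omega),
          mul_zero, zero_mul]
  · rw [if_neg hN]
    apply Finset.sum_eq_zero
    intro r hr
    have hne : ¬ (N = r + r) := fun h => hN ⟨r, h⟩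
    rcases lt_or_gt_of_ne (show (r:ℤ) ≠ (N:ℤ) - r by omega) with h | h
    · rw [qBinom_eq_zero_of_lt (show ((0:ℕ):ℤ) + (r:ℤ) < (N:ℤ) - r by push_cast; omega)]
      ring
    · rw [qBinom_eq_zero_of_lt (show ((0:ℕ):ℤ) + ((N:ℤ) - r) < (r:ℤ) by push_cast; omega),
        mul_zero, zero_mul]

end St0

namespace St0

open PowerSeries

variable {q : ℂ}

noncomputable def Vf (q : ℂ) (J : ℕ) : ℕ → ℂ :=
  fun t => if Even t then qBinom (q^6) ((J:ℤ) + ((t/2 : ℕ):ℤ)) ((t/2 : ℕ):ℤ) else 0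

lemma Vf_zero_ev (hq1 : ‖q‖ < 1) : Vf q 0 = evf := by
  funext t
  rw [Vf, evf]
  by_cases ht : Even t
  · rw [if_pos ht, if_pos ht, show ((0:ℕ):ℤ) + ((t/2:ℕ):ℤ) = ((t/2:ℕ):ℤ) by omega]
    exact qBinom_self (habsQ hq1) (by positivity)
  · rw [if_neg ht, if_neg ht]

lemma V_step (hq0 : q ≠ 0) (hq1 : ‖q‖ < 1) (J : ℕ) :
    PowerSeries.mk (Vf q (J+1)) * (1 - (C q)^(6*(J+1)) * X^2) = PowerSeries.mk (Vf q J) := by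
  have hQ0 : (q:ℂ)^6 ≠ 0 := pow_ne_zero _ hq0
  have hQ1 := habsQ hq1
  ext t
  rw [mul_sub, mul_one, map_sub, ← map_pow, mul_left_comm, PowerSeries.coeff_C_mul,
    PowerSeries.coeff_mul_X_pow']
  simp only [PowerSeries.coeff_mk, Vf]
  rcases t with _ | _ | s
  · norm_num
    rw [qBinom_zero_right (habsQ hq1) (by omega), qBinom_zero_right (habsQ hq1) (by omega)]
  · norm_num
  · rw [if_pos (by omega : 2 ≤ s + 1 + 1), show s + 1 + 1 - 2 = s by omega]
    by_cases hs : Even s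
    · obtain ⟨c, hc⟩ := hs
      have hev2 : Even (s+1+1) := ⟨c+1, by omega⟩
      have hsev : Even s := ⟨c, hc⟩
      rw [if_pos hev2, if_pos hev2, if_pos hsev]
      rw [show ((s+1+1)/2 : ℕ) = c+1 by omega, show ((s/2):ℕ) = c by omega]
      rw [qBinom_pascal hQ0 hQ1 (((J+1:ℕ):ℤ) + ((c+1:ℕ):ℤ)) ((c+1:ℕ):ℤ) (by push_cast; omega)]
      rw [show (((J+1:ℕ):ℤ) + ((c+1:ℕ):ℤ)) - 1 = (J:ℤ) + ((c+1:ℕ):ℤ) by push_cast; ring,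
        show (((J+1:ℕ):ℤ) + ((c+1:ℕ):ℤ)) - ((c+1:ℕ):ℤ) = ((J:ℤ)+1) by push_cast; ring,
        show ((c+1:ℕ):ℤ) - 1 = ((c:ℕ):ℤ) by push_cast; ring]
      rw [Qzpow_eq hq0, show (6*((J:ℤ)+1)) = ((6*(J+1) : ℕ):ℤ) by push_cast; ring,
        zpow_natCast]
      push_cast
      ring
    · have hev2 : ¬ Even (s+1+1) := fun ⟨c, hc⟩ => hs ⟨c-1, by omega⟩
      rw [if_neg hev2, if_neg hev2, if_neg hs]
      ring

lemma BV (hq0 : q ≠ 0) (hq1 : ‖q‖ < 1) :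
    ∀ J, (∏ k ∈ Finset.range (J+1), (1 - (C q)^(6*k) * X^2))
      * PowerSeries.mk (Vf q J) = 1 := by
  intro J
  induction J with
  | zero =>
    rw [Finset.prod_range_one, Vf_zero_ev hq1]
    norm_num
    rw [mul_comm]
    exact mk_ev
  | succ J ih =>
    rw [Finset.prod_range_succ, mul_assoc, mul_comm (1 - (C q)^(6*(J+1)) * X^2),
      V_step hq0 hq1 J, ih]

lemma qbt (b c : ℂ) (hb0 : b ≠ 0) (hb : ‖b‖ < 1) :
    ∀ t, ∏ k ∈ Finset.range t, (1 + PowerSeries.C (c * b^k) * X)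
      = PowerSeries.mk (fun a => b^(a.choose 2) * c^a * qBinom b t a) := by
  intro t
  induction t with
  | zero =>
    rw [Finset.prod_range_zero]
    ext a
    rw [PowerSeries.coeff_one, PowerSeries.coeff_mk]
    rcases a with _ | a'
    · norm_num
      rw [qBinom_self hb (le_refl 0)]
    · rw [if_neg (by omega),
        qBinom_eq_zero_of_lt (show ((0:ℕ):ℤ) < ((a'+1:ℕ):ℤ) by push_cast; omega)]
      ring
  | succ t ih =>
    rw [Finset.prod_range_succ, ih]
    ext a
    rw [mul_add, mul_one, map_add, PowerSeries.coeff_mk, mul_left_comm,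
      mul_comm (PowerSeries.mk fun a => b ^ a.choose 2 * c ^ a * qBinom b (t:ℤ) (a:ℤ)) X,
      coeff_C_mul_X_mul, PowerSeries.coeff_mk]
    rcases a with _ | a'
    · norm_num
      rw [qBinom_zero_right hb (by omega), qBinom_zero_right hb (by omega)]
    · rw [if_pos (by omega), show a' + 1 - 1 = a' by omega]
      by_cases ha : a' ≤ t
      · rw [qBinom_pascal hb0 hb ((t+1:ℕ):ℤ) ((a'+1:ℕ):ℤ) (by push_cast; omega)]
        rw [show (((t+1:ℕ):ℤ)) - 1 = ((t:ℕ):ℤ) by push_cast; ring,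
          show ((a'+1:ℕ):ℤ) - 1 = ((a':ℕ):ℤ) by push_cast; ring,
          show ((t+1:ℕ):ℤ) - ((a'+1:ℕ):ℤ) = (((t-a':ℕ)):ℤ) by push_cast; omega,
          zpow_natCast]
        have hch : (a'+1).choose 2 + (t - a') = t + a'.choose 2 := by
          have h1 : (a'+1).choose 2 = a'.choose 1 + a'.choose 2 := Nat.choose_succ_succ a' 1
          rw [h1, Nat.choose_one_right]
          set c2 := a'.choose 2
          omega
        have hpow : b ^ ((a'+1).choose 2) * b^(t-a') = b ^ (t + a'.choose 2) := by
          rw [← pow_add, hch]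
        linear_combination (-(c^(a'+1) * qBinom b (t:ℤ) ((a':ℕ):ℤ))) * hpow
      · rw [qBinom_eq_zero_of_lt (show ((t:ℕ):ℤ) < ((a'+1:ℕ):ℤ) by push_cast; omega),
          qBinom_eq_zero_of_lt (show ((t:ℕ):ℤ) < ((a':ℕ):ℤ) by push_cast; omega),
          qBinom_eq_zero_of_lt (show ((t+1:ℕ):ℤ) < ((a'+1:ℕ):ℤ) by push_cast; omega)]
        ring

lemma qbt' (hq0 : q ≠ 0) (hq1 : ‖q‖ < 1) (i j t : ℕ) (hj : 1 ≤ j) :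
    ∏ k ∈ Finset.range t, (1 + (PowerSeries.C q)^(i + j*k) * X)
      = PowerSeries.mk (fun a => q^(j*(a.choose 2) + i*a) * qBinom (q^j) t a) := by
  have hb0 : (q:ℂ)^j ≠ 0 := pow_ne_zero _ hq0
  have hb : ‖q^j‖ < 1 := by
    rw [norm_pow]
    exact pow_lt_one₀ (norm_nonneg q) hq1 (by omega)
  have h1 : ∀ k, (1 + (PowerSeries.C q)^(i + j*k) * X)
      = (1 + PowerSeries.C ((q^i) * (q^j)^k) * X) := by
    intro k
    rw [← map_pow, ← pow_mul, ← pow_add]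
  rw [Finset.prod_congr rfl (fun k _ => h1 k), qbt (q^j) (q^i) hb0 hb t]
  exact congrArg PowerSeries.mk (funext fun a => by rw [← pow_mul, ← pow_mul, ← pow_add])

lemma regroup (hq0 : q ≠ 0) (hq1 : ‖q‖ < 1) (M : ℕ) :
    ∏ k ∈ Finset.range (3*M), (1 + (PowerSeries.C q)^(1 + 2*k) * X)
      = (∏ k ∈ Finset.range M, (1 + (PowerSeries.C q)^(3 + 6*k) * X))
        * ((∏ k ∈ Finset.range M, (1 + (PowerSeries.C q)^(1 + 6*k) * X))
          * (∏ k ∈ Finset.range M, (1 + (PowerSeries.C q)^(5 + 6*k) * X))) := by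
  induction M with
  | zero => norm_num
  | succ M ih =>
    rw [show 3*(M+1) = (3*M)+1+1+1 by ring, Finset.prod_range_succ, Finset.prod_range_succ,
      Finset.prod_range_succ, Finset.prod_range_succ, Finset.prod_range_succ,
      Finset.prod_range_succ, ih]
    rw [show 1+2*(3*M) = 1+6*M by ring, show 1+2*(3*M+1) = 3+6*M by ring,
      show 1+2*(3*M+1+1) = 5+6*M by ring]
    ring

lemma GB (hq0 : q ≠ 0) (hq1 : ‖q‖ < 1) :
    ∀ M, Gser q M M * ∏ k ∈ Finset.range (2*M+1), (1 - (C q)^(6*k) * X^2)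
      = (∏ k ∈ Finset.range M, (1 + (C q)^(1 + 6*k) * X))
        * (∏ k ∈ Finset.range M, (1 + (C q)^(5 + 6*k) * X)) := by
  intro M
  induction M with
  | zero =>
    norm_num
    have : Gser q 0 0 = PowerSeries.mk evf := by
      rw [Gser]
      exact congrArg PowerSeries.mk (funext (gfun_00 hq1))
    rw [this]
    exact mk_ev
  | succ M ih =>
    have sa := SaS hq0 hq1 M M
    have sb := SbS hq0 hq1 (M+1) M
    rw [show 6*(M+M)+6 = 6*(2*M+1) by ring] at sa
    rw [show 6*((M+1)+M)+6 = 6*((2*M+1)+1) by ring] at sb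
    rw [show 2*(M+1)+1 = (2*M+1)+1+1 by ring, Finset.prod_range_succ, Finset.prod_range_succ]
    conv_rhs => rw [Finset.prod_range_succ, Finset.prod_range_succ]
    rw [show 1+6*M = 6*M+1 by ring, show 5+6*M = 6*M+5 by ring]
    linear_combination
      ((∏ k ∈ Finset.range (2*M+1), (1 - (C q)^(6*k) * X^2))
        * (1 - (C q)^(6*(2*M+1)) * X^2)) * sb
      + ((∏ k ∈ Finset.range (2*M+1), (1 - (C q)^(6*k) * X^2))
        * (1 + (C q)^(6*M+5) * X)) * sa
      + ((1 + (C q)^(6*M+1) * X) * (1 + (C q)^(6*M+5) * X)) * ih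

lemma key (hq0 : q ≠ 0) (hq1 : ‖q‖ < 1) (M : ℕ) :
    PowerSeries.mk (fun m => q^(2*(m.choose 2) + 1*m) * qBinom (q^2) ((3*M : ℕ):ℤ) (m:ℤ))
      * PowerSeries.mk (Vf q (2*M))
    = PowerSeries.mk (fun n => q^(6*(n.choose 2) + 3*n) * qBinom (q^6) ((M:ℕ):ℤ) (n:ℤ)) * Gser q M M := by
  rw [← qbt' hq0 hq1 1 2 (3*M) (by norm_num), ← qbt' hq0 hq1 3 6 M (by norm_num)]
  rw [regroup hq0 hq1 M]
  calc (∏ k ∈ Finset.range M, (1 + (PowerSeries.C q)^(3 + 6*k) * X))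
        * ((∏ k ∈ Finset.range M, (1 + (PowerSeries.C q)^(1 + 6*k) * X))
          * (∏ k ∈ Finset.range M, (1 + (PowerSeries.C q)^(5 + 6*k) * X)))
        * PowerSeries.mk (Vf q (2*M))
      = (∏ k ∈ Finset.range M, (1 + (PowerSeries.C q)^(3 + 6*k) * X))
        * ((Gser q M M * ∏ k ∈ Finset.range (2*M+1), (1 - (C q)^(6*k) * X^2))
          * PowerSeries.mk (Vf q (2*M))) := by rw [GB hq0 hq1 M]; ring
    _ = (∏ k ∈ Finset.range M, (1 + (PowerSeries.C q)^(3 + 6*k) * X)) * Gser q M M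
        * ((∏ k ∈ Finset.range (2*M+1), (1 - (C q)^(6*k) * X^2))
          * PowerSeries.mk (Vf q (2*M))) := by ring
    _ = (∏ k ∈ Finset.range M, (1 + (PowerSeries.C q)^(3 + 6*k) * X)) * Gser q M M := by
        rw [BV hq0 hq1 (2*M)]
        ring

end St0

namespace St0

lemma two_choose : ∀ n : ℕ, 2 * n.choose 2 + n = n ^ 2
  | 0 => rfl
  | (n+1) => by
    have h1 : (n+1).choose 2 = n.choose 1 + n.choose 2 := Nat.choose_succ_succ n 1
    have h2 : (n+1)^2 = n^2 + 2*n + 1 := by ring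
    have ih := two_choose n
    rw [h1, Nat.choose_one_right, h2, ← ih]
    ring

lemma exp3 (n : ℕ) : 6*(n.choose 2) + 3*n = 3*n^2 := by
  have h := two_choose n
  calc 6*(n.choose 2) + 3*n = 3*(2*(n.choose 2) + n) := by ring
    _ = 3*n^2 := by rw [h]

lemma exp1 (m : ℕ) : 2*(m.choose 2) + 1*m = m^2 := by
  rw [one_mul]
  exact two_choose m

end St0


end

theorem statement_0 (L M : ℕ) (q : ℂ) (h0 : 0 < ‖q‖) (h1 : ‖q‖ < 1) :
    (∑' m : ℕ, if m % 2 = L % 2 then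
        q ^ (m ^ 2) * qBinom (q ^ 2) (3 * (M : ℤ)) (m : ℤ) *
          qBinom (q ^ 6) (2 * (M : ℤ) + ((L : ℤ) - (m : ℤ)) / 2) (2 * (M : ℤ))
      else 0)
    = ∑' j : ℤ, q ^ (3 * j ^ 2 + 2 * j) * Twar (q ^ 3) (q ^ 6) (L : ℤ) (M : ℤ) j j := by
  classical
  have hq0 : q ≠ 0 := fun h => by simp [h] at h0
  have hQ1 := St0.habsQ h1
  have hQ0 : q^6 ≠ 0 := pow_ne_zero _ hq0
  -- LHS: tsum to finite sum
  have hL1 : (∑' m : ℕ, if m % 2 = L % 2 then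
        q ^ (m ^ 2) * qBinom (q ^ 2) (3 * (M : ℤ)) (m : ℤ) *
          qBinom (q ^ 6) (2 * (M : ℤ) + ((L : ℤ) - (m : ℤ)) / 2) (2 * (M : ℤ))
      else 0)
      = ∑ m ∈ Finset.range (L+1), (if m % 2 = L % 2 then
        q ^ (m ^ 2) * qBinom (q ^ 2) (3 * (M : ℤ)) (m : ℤ) *
          qBinom (q ^ 6) (2 * (M : ℤ) + ((L : ℤ) - (m : ℤ)) / 2) (2 * (M : ℤ))
      else 0) := by
    apply tsum_eq_sum
    intro m hm
    simp only [Finset.mem_range, not_lt] at hm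
    by_cases hpar : m % 2 = L % 2
    · rw [if_pos hpar, St0.qBinom_eq_zero_of_lt
        (show 2 * (M:ℤ) + ((L:ℤ) - (m:ℤ)) / 2 < 2 * (M:ℤ) by omega), mul_zero]
    · rw [if_neg hpar]
  -- LHS: termwise match with the key coefficient
  have hL2 : ∀ m ∈ Finset.range (L+1), (if m % 2 = L % 2 then
        q ^ (m ^ 2) * qBinom (q ^ 2) (3 * (M : ℤ)) (m : ℤ) *
          qBinom (q ^ 6) (2 * (M : ℤ) + ((L : ℤ) - (m : ℤ)) / 2) (2 * (M : ℤ))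
      else 0)
      = q^(2*(m.choose 2) + 1*m) * qBinom (q^2) ((3*M : ℕ):ℤ) (m:ℤ)
          * St0.Vf q (2*M) (L - m) := by
    intro m hm
    simp only [Finset.mem_range] at hm
    simp only [St0.Vf]
    by_cases hpar : m % 2 = L % 2
    · have hev : Even (L - m) := ⟨(L-m)/2, by omega⟩
      rw [if_pos hpar, if_pos hev]
      rw [St0.exp1 m, show ((3*M:ℕ):ℤ) = 3*(M:ℤ) by push_cast; ring]
      rw [St0.qBinom_symm (N := 2*(M:ℤ) + ((L:ℤ)-(m:ℤ))/2) (k := 2*(M:ℤ))]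
      rw [show 2*(M:ℤ) + ((L:ℤ)-(m:ℤ))/2 - 2*(M:ℤ) = ((L:ℤ)-(m:ℤ))/2 by ring]
      rw [show ((2*M:ℕ):ℤ) + (((L-m)/2 : ℕ):ℤ) = 2*(M:ℤ) + ((L:ℤ)-(m:ℤ))/2 by omega,
        show ((((L-m)/2 : ℕ)):ℤ) = ((L:ℤ)-(m:ℤ))/2 by omega]
    · have hev : ¬ Even (L - m) := fun ⟨c, hc⟩ => hpar (by omega)
      rw [if_neg hpar, if_neg hev, mul_zero]
  -- coefficient of the key identity
  have hkeyc := congrArg (PowerSeries.coeff L) (St0.key hq0 h1 M)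
  rw [St0.Gser, St0.coeff_mk_mul, St0.coeff_mk_mul] at hkeyc
  -- Twar as finite sum
  have hTwar : ∀ j : ℤ, Twar (q^3) (q^6) (L:ℤ) (M:ℤ) j j
      = ∑ n ∈ Finset.range (M+1), (if ((L:ℤ) - j - (n:ℤ)) % 2 = 0 then
          (q^3) ^ (n^2) * qBinom (q^6) (M:ℤ) (n:ℤ)
            * qBinom (q^6) ((M:ℤ) + j + ((L:ℤ) - j - (n:ℤ))/2) ((M:ℤ)+j)
            * qBinom (q^6) ((M:ℤ) - j + ((L:ℤ) + j - (n:ℤ))/2) ((M:ℤ)-j) else 0) := by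
    intro j
    rw [Twar]
    apply tsum_eq_sum
    intro n hn
    simp only [Finset.mem_range, not_lt] at hn
    by_cases hpar : ((L:ℤ) - j - (n:ℤ)) % 2 = 0
    · rw [if_pos hpar, St0.qBinom_eq_zero_of_lt (show (M:ℤ) < (n:ℤ) by omega)]
      ring
    · rw [if_neg hpar]
  -- outer tsum to finite sum
  have hFzero : ∀ j : ℤ, j ∉ Finset.Icc (-(L:ℤ)) (L:ℤ) →
      q^(3*j^2+2*j) * Twar (q^3) (q^6) (L:ℤ) (M:ℤ) j j = 0 := by
    intro j hj
    simp only [Finset.mem_Icc, not_and_or, not_le] at hj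
    rw [hTwar j, Finset.sum_eq_zero, mul_zero]
    intro n hn
    by_cases hpar : ((L:ℤ) - j - (n:ℤ)) % 2 = 0
    · rw [if_pos hpar]
      rcases hj with hj | hj
      · rw [St0.qBinom_eq_zero_of_lt
          (show (M:ℤ) - j + ((L:ℤ) + j - (n:ℤ))/2 < (M:ℤ) - j by omega), mul_zero]
      · rw [St0.qBinom_eq_zero_of_lt
          (show (M:ℤ) + j + ((L:ℤ) - j - (n:ℤ))/2 < (M:ℤ) + j by omega)]
        ring
    · rw [if_neg hpar]
  have hRsum : (∑' j : ℤ, q^(3*j^2+2*j) * Twar (q^3) (q^6) (L:ℤ) (M:ℤ) j j)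
      = ∑ j ∈ Finset.Icc (-(L:ℤ)) (L:ℤ),
          q^(3*j^2+2*j) * Twar (q^3) (q^6) (L:ℤ) (M:ℤ) j j :=
    tsum_eq_sum hFzero
  -- the inner computation for fixed n
  have hinner : ∀ n : ℕ, n ≤ L → n ≤ M →
      (∑ j ∈ Finset.Icc (-(L:ℤ)) (L:ℤ), q^(3*j^2+2*j) * (if ((L:ℤ) - j - (n:ℤ)) % 2 = 0 then
          (q^3) ^ (n^2) * qBinom (q^6) (M:ℤ) (n:ℤ)
            * qBinom (q^6) ((M:ℤ) + j + ((L:ℤ) - j - (n:ℤ))/2) ((M:ℤ)+j)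
            * qBinom (q^6) ((M:ℤ) - j + ((L:ℤ) + j - (n:ℤ))/2) ((M:ℤ)-j) else 0))
      = q^(6*(n.choose 2) + 3*n) * qBinom (q^6) ((M:ℕ):ℤ) (n:ℤ) * St0.gfun q M M (L - n) := by
    intro n hnL hnM
    set t := L - n with ht
    have hsub : (Finset.range (t+1)).image (fun r : ℕ => (t:ℤ) - 2*r)
        ⊆ Finset.Icc (-(L:ℤ)) (L:ℤ) := by
      intro x hx
      simp only [Finset.mem_image, Finset.mem_range] at hx
      obtain ⟨r, hr, hxr⟩ := hx
      simp only [Finset.mem_Icc]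
      omega
    have hvan : ∀ j ∈ Finset.Icc (-(L:ℤ)) (L:ℤ),
        j ∉ (Finset.range (t+1)).image (fun r : ℕ => (t:ℤ) - 2*r) →
        q^(3*j^2+2*j) * (if ((L:ℤ) - j - (n:ℤ)) % 2 = 0 then
          (q^3) ^ (n^2) * qBinom (q^6) (M:ℤ) (n:ℤ)
            * qBinom (q^6) ((M:ℤ) + j + ((L:ℤ) - j - (n:ℤ))/2) ((M:ℤ)+j)
            * qBinom (q^6) ((M:ℤ) - j + ((L:ℤ) + j - (n:ℤ))/2) ((M:ℤ)-j) else 0) = 0 := by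
      intro j hj hjim
      simp only [Finset.mem_Icc] at hj
      by_cases hpar : ((L:ℤ) - j - (n:ℤ)) % 2 = 0
      · have hjrange : (t:ℤ) < j ∨ j < -(t:ℤ) := by
          by_contra hcon
          push_neg at hcon
          apply hjim
          simp only [Finset.mem_image, Finset.mem_range]
          refine ⟨(((t:ℤ) - j)/2).toNat, by omega, by omega⟩
        rw [if_pos hpar]
        rcases hjrange with hjr | hjr
        · rw [St0.qBinom_eq_zero_of_lt
            (show (M:ℤ) + j + ((L:ℤ) - j - (n:ℤ))/2 < (M:ℤ) + j by omega)]
          ring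
        · rw [St0.qBinom_eq_zero_of_lt
            (show (M:ℤ) - j + ((L:ℤ) + j - (n:ℤ))/2 < (M:ℤ) - j by omega), mul_zero, mul_zero]
      · rw [if_neg hpar, mul_zero]
    rw [← Finset.sum_subset hsub hvan]
    rw [Finset.sum_image (by intro x _ y _ h; simp only at h; omega)]
    rw [St0.gfun, Finset.mul_sum]
    apply Finset.sum_congr rfl
    intro r hr
    simp only [Finset.mem_range] at hr
    rw [if_pos (show ((L:ℤ) - ((t:ℤ) - 2*(r:ℕ)) - (n:ℤ)) % 2 = 0 by omega)]
    rw [show ((L:ℤ) - ((t:ℤ) - 2*(r:ℕ)) - (n:ℤ))/2 = (r:ℤ) by omega,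
      show ((L:ℤ) + ((t:ℤ) - 2*(r:ℕ)) - (n:ℤ))/2 = (t:ℤ) - (r:ℤ) by omega]
    rw [show (M:ℤ) + ((t:ℤ) - 2*(r:ℕ)) + (r:ℤ) = (M:ℤ) + ((t:ℤ) - (r:ℤ)) by push_cast; ring]
    rw [St0.qBinom_symm (N := (M:ℤ) + ((t:ℤ) - (r:ℤ))) (k := (M:ℤ) + ((t:ℤ) - 2*(r:ℕ)))]
    rw [show (M:ℤ) + ((t:ℤ) - (r:ℤ)) - ((M:ℤ) + ((t:ℤ) - 2*(r:ℕ))) = (r:ℤ) by push_cast; ring]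
    rw [show (M:ℤ) - ((t:ℤ) - 2*(r:ℕ)) + ((t:ℤ) - (r:ℤ)) = (M:ℤ) + (r:ℤ) by push_cast; ring]
    rw [St0.qBinom_symm (N := (M:ℤ) + (r:ℤ)) (k := (M:ℤ) - ((t:ℤ) - 2*(r:ℕ)))]
    rw [show (M:ℤ) + (r:ℤ) - ((M:ℤ) - ((t:ℤ) - 2*(r:ℕ))) = (t:ℤ) - (r:ℤ) by push_cast; ring]
    rw [St0.exp3 n, show (q:ℂ)^(3*n^2) = (q^3)^(n^2) by rw [← pow_mul], St0.wpow]
    push_cast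
    ring
  -- assembling the right-hand side
  set K := min L M with hK
  have hR : (∑' j : ℤ, q^(3*j^2+2*j) * Twar (q^3) (q^6) (L:ℤ) (M:ℤ) j j)
      = ∑ i ∈ Finset.range (L+1),
          (q^(6*(i.choose 2) + 3*i) * qBinom (q^6) ((M:ℕ):ℤ) (i:ℤ)) * St0.gfun q M M (L - i) := by
    rw [hRsum]
    have s1 : ∀ j ∈ Finset.Icc (-(L:ℤ)) (L:ℤ),
        q^(3*j^2+2*j) * Twar (q^3) (q^6) (L:ℤ) (M:ℤ) j j
        = ∑ n ∈ Finset.range (M+1), q^(3*j^2+2*j) * (if ((L:ℤ) - j - (n:ℤ)) % 2 = 0 then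
            (q^3) ^ (n^2) * qBinom (q^6) (M:ℤ) (n:ℤ)
              * qBinom (q^6) ((M:ℤ) + j + ((L:ℤ) - j - (n:ℤ))/2) ((M:ℤ)+j)
              * qBinom (q^6) ((M:ℤ) - j + ((L:ℤ) + j - (n:ℤ))/2) ((M:ℤ)-j) else 0) := by
      intro j _
      rw [hTwar j, Finset.mul_sum]
    rw [Finset.sum_congr rfl s1, Finset.sum_comm]
    have s2 : ∑ n ∈ Finset.range (M+1), ∑ j ∈ Finset.Icc (-(L:ℤ)) (L:ℤ),
          q^(3*j^2+2*j) * (if ((L:ℤ) - j - (n:ℤ)) % 2 = 0 then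
            (q^3) ^ (n^2) * qBinom (q^6) (M:ℤ) (n:ℤ)
              * qBinom (q^6) ((M:ℤ) + j + ((L:ℤ) - j - (n:ℤ))/2) ((M:ℤ)+j)
              * qBinom (q^6) ((M:ℤ) - j + ((L:ℤ) + j - (n:ℤ))/2) ((M:ℤ)-j) else 0)
        = ∑ n ∈ Finset.range (K+1), ∑ j ∈ Finset.Icc (-(L:ℤ)) (L:ℤ),
          q^(3*j^2+2*j) * (if ((L:ℤ) - j - (n:ℤ)) % 2 = 0 then
            (q^3) ^ (n^2) * qBinom (q^6) (M:ℤ) (n:ℤ)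
              * qBinom (q^6) ((M:ℤ) + j + ((L:ℤ) - j - (n:ℤ))/2) ((M:ℤ)+j)
              * qBinom (q^6) ((M:ℤ) - j + ((L:ℤ) + j - (n:ℤ))/2) ((M:ℤ)-j) else 0) := by
      refine (Finset.sum_subset (by intro x hx; simp only [Finset.mem_range] at hx ⊢; omega)
        ?_).symm
      intro n hn hn2
      simp only [Finset.mem_range] at hn hn2
      have hnL : L < n := by omega
      apply Finset.sum_eq_zero
      intro j hj
      by_cases hpar : ((L:ℤ) - j - (n:ℤ)) % 2 = 0
      · rw [if_pos hpar]
        rcases (show ((L:ℤ) - j - (n:ℤ))/2 < 0 ∨ ((L:ℤ) + j - (n:ℤ))/2 < 0 by omega) with h | h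
        · rw [St0.qBinom_eq_zero_of_lt
            (show (M:ℤ) + j + ((L:ℤ) - j - (n:ℤ))/2 < (M:ℤ) + j by omega)]
          ring
        · rw [St0.qBinom_eq_zero_of_lt
            (show (M:ℤ) - j + ((L:ℤ) + j - (n:ℤ))/2 < (M:ℤ) - j by omega), mul_zero, mul_zero]
      · rw [if_neg hpar, mul_zero]
    rw [s2]
    have s3 : ∀ n ∈ Finset.range (K+1), ∑ j ∈ Finset.Icc (-(L:ℤ)) (L:ℤ),
          q^(3*j^2+2*j) * (if ((L:ℤ) - j - (n:ℤ)) % 2 = 0 then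
            (q^3) ^ (n^2) * qBinom (q^6) (M:ℤ) (n:ℤ)
              * qBinom (q^6) ((M:ℤ) + j + ((L:ℤ) - j - (n:ℤ))/2) ((M:ℤ)+j)
              * qBinom (q^6) ((M:ℤ) - j + ((L:ℤ) + j - (n:ℤ))/2) ((M:ℤ)-j) else 0)
        = (q^(6*(n.choose 2) + 3*n) * qBinom (q^6) ((M:ℕ):ℤ) (n:ℤ)) * St0.gfun q M M (L - n) := by
      intro n hn
      simp only [Finset.mem_range] at hn
      exact hinner n (by omega) (by omega)
    rw [Finset.sum_congr rfl s3]
    refine Finset.sum_subset (by intro x hx; simp only [Finset.mem_range] at hx ⊢; omega) ?_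
    intro n hn hn2
    simp only [Finset.mem_range] at hn hn2
    rw [St0.qBinom_eq_zero_of_lt (show ((M:ℕ):ℤ) < (n:ℤ) by omega)]
    ring
  -- final assembly
  rw [hL1, Finset.sum_congr rfl hL2, hkeyc, hR]
end

section
/- Let q be a complex number with 0<|q|<1 and let z be a fixed square root of q. Let M ≥ 0 be an integer, a, b integers, and σ ∈ {0,1}. Then the limit of T(L, M; a, b; q) as L → ∞ along integers L with L − a ≡ σ (mod 2) exists and equals ( (−z;q)_M + (−1)^σ (z;q)_M ) / ( 2 (q;q)_{2M} ) · [2M choose M−b]_q. -/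
open Finset

section Helpers

variable {q : ℂ}

lemma qPoch_ne_zero (h1 : ‖q‖ < 1) (n : ℕ) : qPoch q q n ≠ 0 := by
  rw [qPoch, Finset.prod_ne_zero_iff]
  intro k _
  have hlt : ‖q * q ^ k‖ < 1 := by
    rw [norm_mul, norm_pow]
    calc ‖q‖ * ‖q‖ ^ k ≤ ‖q‖ * 1 :=
          mul_le_mul_of_nonneg_left (pow_le_one₀ (by positivity) h1.le) (by positivity)
      _ < 1 := by simpa using h1
  intro h
  rw [sub_eq_zero] at h
  rw [← h] at hlt
  simp at hlt

lemma qPoch_succ (a : ℂ) (n : ℕ) : qPoch a q (n + 1) = qPoch a q n * (1 - a * q ^ n) := by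
  rw [qPoch, qPoch, Finset.prod_range_succ]

lemma qPoch_add (a : ℂ) (m n : ℕ) :
    qPoch a q (m + n) = qPoch a q m * ∏ j ∈ range n, (1 - a * q ^ (m + j)) := by
  rw [qPoch, qPoch, Finset.prod_range_add]

lemma qBinom_natCast (M n : ℕ) : qBinom q (M : ℤ) (n : ℤ) =
    if n ≤ M then qPoch q q M / (qPoch q q n * qPoch q q (M - n)) else 0 := by
  rw [qBinom]
  by_cases h : n ≤ M
  · rw [if_pos (show 0 ≤ (n : ℤ) ∧ (n : ℤ) ≤ (M : ℤ) by omega), if_pos h,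
      show (M : ℤ) - (n : ℤ) = ((M - n : ℕ) : ℤ) from by omega]
    simp
  · rw [if_neg (show ¬(0 ≤ (n : ℤ) ∧ (n : ℤ) ≤ (M : ℤ)) by omega), if_neg h]

lemma pascal (h1 : ‖q‖ < 1) (M n : ℕ) (hn : n ≤ M) :
    qBinom q ((M : ℤ) + 1) ((n : ℤ) + 1) =
      qBinom q (M : ℤ) ((n : ℤ) + 1) + q ^ (M - n) * qBinom q (M : ℤ) (n : ℤ) := by
  have hq0 : qPoch q q 0 = 1 := by simp [qPoch]
  have e1 : ((M : ℤ) + 1) = ((M + 1 : ℕ) : ℤ) := by push_cast; ring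
  have e2 : ((n : ℤ) + 1) = ((n + 1 : ℕ) : ℤ) := by push_cast; ring
  rw [e1, e2, qBinom_natCast, qBinom_natCast, qBinom_natCast]
  rcases eq_or_lt_of_le hn with h | h
  · subst h
    rw [if_pos le_rfl, if_neg (by omega), if_pos le_rfl]
    simp [show n + 1 - (n + 1) = 0 from by omega, Nat.sub_self, hq0,
      div_self (qPoch_ne_zero h1 (n + 1)), div_self (qPoch_ne_zero h1 n)]
  · rw [if_pos (by omega), if_pos (by omega), if_pos hn]
    have hMn2 : M + 1 - (n + 1) = (M - n - 1) + 1 := by omega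
    have hMn : M - n = (M - n - 1) + 1 := by omega
    have hM1 : M - (n + 1) = M - n - 1 := by omega
    rw [hMn2, hM1, qPoch_succ q M, qPoch_succ q n, qPoch_succ q (M - n - 1)]
    rw [hMn, qPoch_succ q (M - n - 1)]
    have p1 := qPoch_ne_zero h1 (n := M)
    have p3 := qPoch_ne_zero h1 (n := n)
    have p4 := qPoch_ne_zero h1 (n := M - n - 1)
    have x1 : (1 - q * q ^ n) ≠ 0 := by
      have := qPoch_ne_zero h1 (n := n + 1); rw [qPoch_succ] at this
      exact right_ne_zero_of_mul this
    have y1 : (1 - q * q ^ (M - n - 1)) ≠ 0 := by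
      have := qPoch_ne_zero h1 (n := M - n); rw [hMn, qPoch_succ] at this
      exact right_ne_zero_of_mul this
    rw [hMn, pow_succ]
    set k := M - n - 1 with hk
    have hw : q ^ M = q * (q ^ n * q ^ k) := by
      rw [show M = n + k + 1 from by omega, pow_succ, pow_add]; ring
    rw [hw]
    set A := qPoch q q n
    set B := qPoch q q k
    set C := qPoch q q M
    set u := q ^ n
    set v := q ^ k
    simp only [Nat.add_sub_cancel]
    change C * (1 - q * (q * (u * v))) / (A * (1 - q * u) * (B * (1 - q * v))) =
      C / (A * (1 - q * u) * B) + v * q * (C / (A * (B * (1 - q * v))))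
    field_simp
    ring


lemma qBinom_self_zero (h1 : ‖q‖ < 1) (M : ℕ) : qBinom q (M : ℤ) 0 = 1 := by
  rw [show (0 : ℤ) = ((0 : ℕ) : ℤ) from rfl, qBinom_natCast, if_pos (Nat.zero_le M),
    Nat.sub_zero, show qPoch q q 0 = 1 from by simp [qPoch], one_mul,
    div_self (qPoch_ne_zero h1 M)]

lemma qBinom_gt (M n : ℕ) (h : M < n) : qBinom q (M : ℤ) (n : ℤ) = 0 := by
  rw [qBinom_natCast, if_neg (by omega)]

lemma q_binom_theorem {z : ℂ} (h1 : ‖q‖ < 1) (hz : z ^ 2 = q) (t : ℂ) (M : ℕ) :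
    ∑ n ∈ range (M + 1), t ^ n * z ^ (n ^ 2) * qBinom q (M : ℤ) (n : ℤ) =
      qPoch (-(t * z)) q M := by
  induction M with
  | zero =>
    have := qBinom_self_zero h1 0
    simp only [Nat.cast_zero] at this
    simp [qPoch, this]
  | succ M ih =>
    rw [Finset.sum_range_succ' _ (M + 1)]
    have hstep : ∀ n ∈ range (M + 1),
        t ^ (n + 1) * z ^ ((n + 1) ^ 2) * qBinom q ((M : ℤ) + 1) ((n : ℤ) + 1) =
        t ^ (n + 1) * z ^ ((n + 1) ^ 2) * qBinom q (M : ℤ) ((n : ℤ) + 1) +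
          (t * z * q ^ M) * (t ^ n * z ^ (n ^ 2) * qBinom q (M : ℤ) (n : ℤ)) := by
      intro n hn
      rw [Finset.mem_range] at hn
      rw [pascal h1 M n (by omega)]
      have hzq : z ^ ((n + 1) ^ 2) = z ^ (n ^ 2) * q ^ n * z := by
        rw [show (n + 1) ^ 2 = n ^ 2 + 2 * n + 1 from by ring, pow_add, pow_add, pow_mul, hz,
          pow_one]
      have hqq : q ^ (M - n) * q ^ n = q ^ M := by
        rw [← pow_add]; congr 1; omega
      rw [hzq]
      linear_combination (t ^ (n + 1) * z ^ (n ^ 2) * z * qBinom q (M : ℤ) (n : ℤ)) * hqq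
    push_cast
    rw [Finset.sum_congr rfl (by intro n hn; push_cast; exact hstep n hn),
      Finset.sum_add_distrib, ← Finset.mul_sum, ih]
    have h0 : (fun n : ℕ => t ^ n * z ^ (n ^ 2) * qBinom q (M : ℤ) (n : ℤ)) 0 = 1 := by
      simpa using qBinom_self_zero h1 M
    have hre : ∑ n ∈ range (M + 1), t ^ (n + 1) * z ^ ((n + 1) ^ 2) *
        qBinom q (M : ℤ) ((n : ℤ) + 1) + t ^ 0 * z ^ (0 ^ 2) * qBinom q ((M : ℤ) + 1) 0 =
        qPoch (-(t * z)) q M := by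
      have hb0 : qBinom q ((M : ℤ) + 1) 0 = 1 := by
        have := qBinom_self_zero h1 (M + 1); push_cast at this; exact this
      have := Finset.sum_range_succ' (fun n : ℕ => t ^ n * z ^ (n ^ 2) *
        qBinom q (M : ℤ) (n : ℤ)) (M + 1)
      rw [Finset.sum_range_succ _ (M + 1), qBinom_gt M (M + 1) (by omega)] at this
      simp only [mul_zero, add_zero] at this
      rw [ih] at this
      rw [hb0, this]
      congr 1
      simp only [Nat.cast_zero, qBinom_self_zero h1 M, mul_one]
    rw [qPoch_succ]
    linear_combination hre

open Filter in
lemma tendsto_qBinom (h1 : ‖q‖ < 1) (k : ℤ) :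
    Tendsto (fun N : ℤ => qBinom q N k) atTop (nhds (invPoch q q k)) := by
  by_cases hk : 0 ≤ k
  · rw [invPoch, if_pos hk]
    set κ := k.toNat with hκ
    have hprod : Tendsto (fun m : ℕ => (∏ j ∈ range κ, (1 - q * q ^ (m + j))) / qPoch q q κ)
        atTop (nhds ((qPoch q q κ)⁻¹)) := by
      have h1' : Tendsto (fun m : ℕ => ∏ j ∈ range κ, (1 - q * q ^ (m + j))) atTop
          (nhds (∏ j ∈ range κ, (1 : ℂ))) := by
        apply tendsto_finset_prod
        intro j _
        have hpow : Tendsto (fun m : ℕ => q ^ (m + j)) atTop (nhds 0) := by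
          have : Tendsto (fun m : ℕ => q ^ m * q ^ j) atTop (nhds (0 * q ^ j)) :=
            (tendsto_pow_atTop_nhds_zero_of_norm_lt_one (by simpa using h1)).mul_const _
          simpa [pow_add] using this
        have := (tendsto_const_nhds (x := (1:ℂ))).sub (tendsto_const_nhds (x := q).mul hpow)
        simpa using this
      simp only [Finset.prod_const_one] at h1'
      have := h1'.div_const (qPoch q q κ)
      simpa using this
    have hm : Tendsto (fun N : ℤ => N.toNat - κ) atTop atTop := by
      rw [tendsto_atTop_atTop]
      intro b
      exact ⟨(b : ℤ) + κ, fun N hN => by omega⟩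
    have := hprod.comp hm
    apply this.congr'
    filter_upwards [eventually_ge_atTop (k + 1)] with N hN
    have hNk : k ≤ N := by omega
    simp only [Function.comp]
    rw [qBinom, if_pos ⟨hk, hNk⟩]
    have hsplit : N.toNat = (N.toNat - κ) + κ := by omega
    have hNk2 : (N - k).toNat = N.toNat - κ := by omega
    rw [hNk2, ← hκ]
    nth_rewrite 2 [hsplit]
    rw [qPoch_add]
    rw [div_eq_div_iff (qPoch_ne_zero h1 _)
      (mul_ne_zero (qPoch_ne_zero h1 _) (qPoch_ne_zero h1 _))]
    ring
  · have : invPoch q q k = 0 := by rw [invPoch, if_neg hk]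
    rw [this]
    apply tendsto_const_nhds.congr
    intro N
    rw [qBinom, if_neg (by tauto)]

lemma parity_sum {z : ℂ} (h1 : ‖q‖ < 1) (hz : z ^ 2 = q) {σ : ℕ}
    (hσ : σ = 0 ∨ σ = 1) (M : ℕ) :
    ∑ n ∈ range (M + 1), (if n % 2 = σ then z ^ (n ^ 2) * qBinom q (M : ℤ) (n : ℤ) else 0) =
      (qPoch (-z) q M + (-1) ^ σ * qPoch z q M) / 2 := by
  have ha := q_binom_theorem h1 hz 1 M
  have hb := q_binom_theorem h1 hz (-1) M
  rw [one_mul] at ha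
  rw [neg_mul, one_mul, neg_neg] at hb
  rw [eq_div_iff (two_ne_zero), ← ha, ← hb, Finset.sum_mul, Finset.mul_sum,
    ← Finset.sum_add_distrib]
  apply Finset.sum_congr rfl
  intro n _
  have hneg : ((-1 : ℂ)) ^ n = if n % 2 = 0 then 1 else -1 := by
    rcases Nat.even_or_odd n with he | he
    · rw [he.neg_one_pow, if_pos (Nat.even_iff.mp he)]
    · rw [Nat.odd_iff] at he
      rw [Odd.neg_one_pow (Nat.odd_iff.mpr he), if_neg (by omega)]
  rw [one_pow, hneg]
  rcases hσ with h | h <;> subst h <;> by_cases hp : n % 2 = 0 <;>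
    simp [hp, show ¬ ((0:ℕ) = 1) from by omega] <;> (try split) <;> (first | ring1 | (exfalso; omega))

lemma qBinom_two_mul (h1 : ‖q‖ < 1) (M : ℕ) (b : ℤ) :
    qBinom q (2 * (M : ℤ)) ((M : ℤ) - b) =
      qPoch q q (2 * M) * (invPoch q q ((M : ℤ) + b) * invPoch q q ((M : ℤ) - b)) := by
  rw [qBinom, invPoch, invPoch]
  by_cases hb1 : 0 ≤ (M : ℤ) - b
  · by_cases hb2 : (M : ℤ) - b ≤ 2 * (M : ℤ)
    · rw [if_pos ⟨hb1, hb2⟩, if_pos (by omega), if_pos hb1,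
        show (2 * (M : ℤ)).toNat = 2 * M from by omega,
        show (2 * (M : ℤ) - ((M : ℤ) - b)).toNat = ((M : ℤ) + b).toNat from by omega,
        div_eq_mul_inv, mul_inv]
      ring
    · rw [if_neg (by tauto), if_neg (by omega)]
      simp
  · rw [if_neg (by tauto), if_neg hb1]
    simp


end Helpers

open Filter

theorem statement_3 (q z : ℂ) (h0 : 0 < ‖q‖) (h1 : ‖q‖ < 1)
    (hz : z ^ 2 = q) (M : ℕ) (a b : ℤ) (σ : ℕ) (hσ : σ = 0 ∨ σ = 1) :
    Filter.Tendsto (fun L : ℕ => Twar z q (L : ℤ) (M : ℤ) a b)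
      (Filter.atTop ⊓ Filter.principal {L : ℕ | ((L : ℤ) - a) % 2 = (σ : ℤ)})
      (nhds ((qPoch (-z) q M + (-1) ^ σ * qPoch z q M) / (2 * qPoch q q (2 * M)) *
        qBinom q (2 * (M : ℤ)) ((M : ℤ) - b))) := by
  simp only [Twar]
  set F := Filter.atTop ⊓ Filter.principal {L : ℕ | ((L : ℤ) - a) % 2 = (σ : ℤ)} with hFdef
  have hfin : ∀ L : ℕ, (∑' n : ℕ, if ((L : ℤ) - a - (n : ℤ)) % 2 = 0 then
      z ^ (n ^ 2) * qBinom q (M : ℤ) (n : ℤ) *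
        qBinom q ((M : ℤ) + b + ((L : ℤ) - a - (n : ℤ)) / 2) ((M : ℤ) + b) *
        qBinom q ((M : ℤ) - b + ((L : ℤ) + a - (n : ℤ)) / 2) ((M : ℤ) - b) else 0) =
      ∑ n ∈ range (M + 1), (if ((L : ℤ) - a - (n : ℤ)) % 2 = 0 then
      z ^ (n ^ 2) * qBinom q (M : ℤ) (n : ℤ) *
        qBinom q ((M : ℤ) + b + ((L : ℤ) - a - (n : ℤ)) / 2) ((M : ℤ) + b) *
        qBinom q ((M : ℤ) - b + ((L : ℤ) + a - (n : ℤ)) / 2) ((M : ℤ) - b) else 0) := by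
    intro L
    apply tsum_eq_sum
    intro n hn
    rw [Finset.mem_range, not_lt] at hn
    have hz0 : qBinom q (M : ℤ) (n : ℤ) = 0 := qBinom_gt M n (by omega)
    simp [hz0]
  have hlim : ∀ n : ℕ, Tendsto (fun L : ℕ =>
      if ((L : ℤ) - a - (n : ℤ)) % 2 = 0 then
      z ^ (n ^ 2) * qBinom q (M : ℤ) (n : ℤ) *
        qBinom q ((M : ℤ) + b + ((L : ℤ) - a - (n : ℤ)) / 2) ((M : ℤ) + b) *
        qBinom q ((M : ℤ) - b + ((L : ℤ) + a - (n : ℤ)) / 2) ((M : ℤ) - b) else 0) F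
      (nhds (if n % 2 = σ then z ^ (n ^ 2) * qBinom q (M : ℤ) (n : ℤ) *
        invPoch q q ((M : ℤ) + b) * invPoch q q ((M : ℤ) - b) else 0)) := by
    intro n
    have harg1 : Tendsto (fun L : ℕ => (M : ℤ) + b + ((L : ℤ) - a - (n : ℤ)) / 2) F atTop := by
      apply Tendsto.mono_left _ inf_le_left
      rw [tendsto_atTop_atTop]
      intro B
      refine ⟨(2 * (B - M - b) + a + n + 2).toNat, fun L hL => ?_⟩
      have hx := Int.self_le_toNat (2 * (B - M - b) + a + n + 2)
      have hy : ((2 * (B - M - b) + a + n + 2).toNat : ℤ) ≤ (L : ℤ) := by exact_mod_cast hL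
      omega
    have harg2 : Tendsto (fun L : ℕ => (M : ℤ) - b + ((L : ℤ) + a - (n : ℤ)) / 2) F atTop := by
      apply Tendsto.mono_left _ inf_le_left
      rw [tendsto_atTop_atTop]
      intro B
      refine ⟨(2 * (B - M + b) - a + n + 2).toNat, fun L hL => ?_⟩
      have hx := Int.self_le_toNat (2 * (B - M + b) - a + n + 2)
      have hy : ((2 * (B - M + b) - a + n + 2).toNat : ℤ) ≤ (L : ℤ) := by exact_mod_cast hL
      omega
    by_cases hp : n % 2 = σ
    · rw [if_pos hp]
      have h2 := (tendsto_qBinom h1 ((M : ℤ) + b)).comp harg1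
      have h3 := (tendsto_qBinom h1 ((M : ℤ) - b)).comp harg2
      have h4 := ((tendsto_const_nhds
        (x := z ^ (n ^ 2) * qBinom q (M : ℤ) (n : ℤ)) (f := F)).mul h2).mul h3
      apply h4.congr'
      rw [EventuallyEq, hFdef, eventually_inf_principal]
      apply Eventually.of_forall
      intro L hL
      simp only [Set.mem_setOf_eq] at hL
      rw [if_pos (by omega)]
      simp only [Function.comp_apply]
    · rw [if_neg hp]
      apply tendsto_const_nhds.congr'
      rw [EventuallyEq, hFdef, eventually_inf_principal]
      apply Eventually.of_forall
      intro L hL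
      simp only [Set.mem_setOf_eq] at hL
      rw [if_neg (by omega)]
  have hsum := tendsto_finset_sum (range (M + 1)) (fun n _ => hlim n)
  have hT2 := hsum.congr (fun L => (hfin L).symm)
  have hval : ∑ n ∈ range (M + 1), (if n % 2 = σ then z ^ (n ^ 2) * qBinom q (M : ℤ) (n : ℤ) *
        invPoch q q ((M : ℤ) + b) * invPoch q q ((M : ℤ) - b) else 0) =
      (qPoch (-z) q M + (-1) ^ σ * qPoch z q M) / (2 * qPoch q q (2 * M)) *
        qBinom q (2 * (M : ℤ)) ((M : ℤ) - b) := by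
    have hstep : ∀ n ∈ range (M + 1),
        (if n % 2 = σ then z ^ (n ^ 2) * qBinom q (M : ℤ) (n : ℤ) *
          invPoch q q ((M : ℤ) + b) * invPoch q q ((M : ℤ) - b) else 0) =
        (if n % 2 = σ then z ^ (n ^ 2) * qBinom q (M : ℤ) (n : ℤ) else 0) *
          (invPoch q q ((M : ℤ) + b) * invPoch q q ((M : ℤ) - b)) := by
      intro n _
      split
      · ring
      · rw [zero_mul]
    rw [Finset.sum_congr rfl hstep, ← Finset.sum_mul, parity_sum h1 hz hσ M,
      qBinom_two_mul h1 M b]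
    have hP := qPoch_ne_zero h1 (2 * M)
    field_simp
  rwa [hval] at hT2
end

section
/- Let ν be a positive integer and, for k = 1,…,ν, write N_k = n_k + n_{k+1} + … + n_ν. For every nonnegative integer M and every complex number q with 0<|q|<1: Σ_{n₁,…,n_ν ≥ 0} q^{3(N₁²+N₂²+…+N_ν²)} (−q;q²)_{3n_ν} / ( (q⁶;q⁶)_{M−N₁} (q⁶;q⁶)_{n₁} (q⁶;q⁶)_{n₂} ⋯ (q⁶;q⁶)_{n_{ν−1}} (q⁶;q⁶)_{2n_ν} ) = ( (−q³;q⁶)_M / (q⁶;q⁶)_{2M} ) · Σ_{j=−M}^{M} q^{3(ν+1)j² + 2j} [2M choose M+j]_{q⁶}, where the convention 1/(q;q)_k := 0 for k < 0 makes the left-hand sum finite (only terms with N₁ ≤ M contribute). -/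
open Finset

namespace St8
open Finset

lemma qPoch_zero (a Q : ℂ) : qPoch a Q 0 = 1 := by simp [qPoch]

lemma qPoch_succ (a Q : ℂ) (n : ℕ) : qPoch a Q (n+1) = qPoch a Q n * (1 - a * Q ^ n) :=
  Finset.prod_range_succ _ _

lemma qPoch_one (a Q : ℂ) : qPoch a Q 1 = 1 - a := by simp [qPoch]

lemma qPoch_shift (a Q : ℂ) (i n : ℕ) :
    qPoch a Q (i + n) = qPoch a Q i * qPoch (a * Q ^ i) Q n := by
  induction n with
  | zero => simp [qPoch_zero]
  | succ n ih =>
      rw [← add_assoc, qPoch_succ, ih, qPoch_succ]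
      ring

lemma qPoch_first (x Q : ℂ) (n : ℕ) : qPoch x Q (n+1) = (1 - x) * qPoch (x * Q) Q n := by
  rw [show n + 1 = 1 + n by omega, qPoch_shift, qPoch_one, pow_one]

lemma qPoch_ne_zero {a Q : ℂ} (h : ∀ k : ℕ, ‖a * Q ^ k‖ < 1) (n : ℕ) :
    qPoch a Q n ≠ 0 := by
  refine Finset.prod_ne_zero_iff.2 fun k _ => ?_
  intro hk
  have h1 : a * Q ^ k = 1 := by linear_combination -hk
  have := h k
  rw [h1] at this
  simp at this

lemma invPoch_ofNat (a Q : ℂ) (n : ℕ) : invPoch a Q (n : ℤ) = (qPoch a Q n)⁻¹ := by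
  simp [invPoch]

lemma invPoch_neg (a Q : ℂ) {k : ℤ} (hk : k < 0) : invPoch a Q k = 0 := by
  simp [invPoch, not_le.2 hk]

lemma choose2 (n : ℕ) : n * n = n.choose 2 + n.choose 2 + n := by
  induction n with
  | zero => simp
  | succ n ih =>
      rw [Nat.choose_succ_succ, Nat.choose_one_right]
      calc (n+1) * (n+1) = n * n + 2*n + 1 := by ring
      _ = (n.choose 2 + n.choose 2 + n) + 2*n+1 := by rw [ih]
      _ = _ := by ring

end St8

namespace St8
open Finset

noncomputable def gb (Q : ℂ) (N k : ℕ) : ℂ :=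
  if k ≤ N then qPoch Q Q N / (qPoch Q Q k * qPoch Q Q (N - k)) else 0

lemma gb_self {Q : ℂ} (hP : ∀ n : ℕ, qPoch Q Q n ≠ 0) (N : ℕ) : gb Q N N = 1 := by
  rw [gb, if_pos le_rfl, Nat.sub_self, qPoch_zero, mul_one, div_self (hP N)]

lemma gb_zero {Q : ℂ} (hP : ∀ n : ℕ, qPoch Q Q n ≠ 0) (N : ℕ) : gb Q N 0 = 1 := by
  rw [gb, if_pos (Nat.zero_le N), Nat.sub_zero, qPoch_zero, one_mul, div_self (hP N)]

lemma gb_gt {Q : ℂ} {N k : ℕ} (h : N < k) : gb Q N k = 0 := by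
  rw [gb, if_neg (by omega)]

lemma qPoch_factor_ne_zero {Q : ℂ} (hP : ∀ n : ℕ, qPoch Q Q n ≠ 0) (k : ℕ) :
    (1 : ℂ) - Q * Q ^ k ≠ 0 := by
  have := hP (k+1)
  rw [qPoch_succ] at this
  exact (mul_ne_zero_iff.mp this).2

lemma gb_pascal {Q : ℂ} (hP : ∀ n : ℕ, qPoch Q Q n ≠ 0) (N k : ℕ) :
    gb Q (N+1) (k+1) = gb Q N (k+1) + Q ^ (N - k) * gb Q N k := by
  by_cases hk : k + 1 ≤ N
  · obtain ⟨d, rfl⟩ : ∃ d, N = k + d + 1 := ⟨N - k - 1, by omega⟩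
    rw [gb, if_pos (by omega), gb, if_pos (by omega), gb, if_pos (by omega)]
    have e1 : k + d + 1 + 1 - (k + 1) = d + 1 := by omega
    have e2 : k + d + 1 - (k + 1) = d := by omega
    have e3 : k + d + 1 - k = d + 1 := by omega
    rw [e1, e2, e3, show k + d + 1 + 1 = (k + d + 1) + 1 from rfl,
      qPoch_succ Q Q (k + d + 1), qPoch_succ Q Q k, qPoch_succ Q Q d]
    have f1 := qPoch_factor_ne_zero hP k
    have f2 := qPoch_factor_ne_zero hP d
    field_simp [hP k, hP d, hP (k + d + 1)]
    ring
  · by_cases hk2 : k = N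
    · subst hk2
      rw [gb_self hP, gb_gt (by omega), gb_self hP, Nat.sub_self, pow_zero]
      ring
    · have h2 : N < k := by omega
      rw [gb_gt (by omega), gb_gt h2, gb_gt (by omega)]
      ring

end St8
namespace St8
open Finset

lemma choose2_succ (i : ℕ) : (i+1).choose 2 = i.choose 2 + i := by
  simp [Nat.choose_succ_succ, Nat.choose_one_right, Nat.add_comm]

lemma sum_shift (f : ℕ → ℂ) (K : ℕ) (hlast : f (K+1) = 0) :
    ∑ i ∈ range (K+1), f (i+1) + f 0 = ∑ n ∈ range (K+1), f n := by
  have h := Finset.sum_range_succ' f (K+1)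
  rw [Finset.sum_range_succ, hlast, add_zero] at h
  exact h.symm

lemma qbt {Q : ℂ} (hP : ∀ n : ℕ, qPoch Q Q n ≠ 0) (z : ℂ) (N : ℕ) :
    qPoch (-z) Q N = ∑ k ∈ range (N+1), gb Q N k * Q ^ (k.choose 2) * z ^ k := by
  induction N with
  | zero => simp [qPoch_zero, gb_self hP]
  | succ N ih =>
      have key : ∑ k ∈ range (N+1+1), gb Q (N+1) k * Q ^ (k.choose 2) * z ^ k
          = qPoch (-z) Q N * (1 - -z * Q ^ N) := by
        rw [Finset.sum_range_succ']
        have h0 : gb Q (N+1) 0 * Q ^ (Nat.choose 0 2) * z ^ 0 = 1 := by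
          simp [gb_zero hP]
        rw [h0]
        have hsplit : ∀ i ∈ range (N+1),
            gb Q (N+1) (i+1) * Q ^ ((i+1).choose 2) * z ^ (i+1)
            = gb Q N (i+1) * Q ^ ((i+1).choose 2) * z ^ (i+1)
              + (Q ^ N * z) * (gb Q N i * Q ^ (i.choose 2) * z ^ i) := by
          intro i hi
          simp only [Finset.mem_range] at hi
          rw [gb_pascal hP]
          have hp : Q ^ (N - i) * Q ^ ((i+1).choose 2) = Q ^ N * Q ^ (i.choose 2) := by
            rw [choose2_succ, ← pow_add, ← pow_add]; congr 1; omega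
          calc (gb Q N (i+1) + Q ^ (N-i) * gb Q N i) * Q ^ ((i+1).choose 2) * z ^ (i+1)
              = gb Q N (i+1) * Q ^ ((i+1).choose 2) * z ^ (i+1)
                + (Q ^ (N-i) * Q ^ ((i+1).choose 2)) * gb Q N i * z ^ (i+1) := by ring
            _ = _ := by rw [hp]; ring
        rw [Finset.sum_congr rfl hsplit, Finset.sum_add_distrib, ← Finset.mul_sum]
        have hrejoin : ∑ i ∈ range (N+1), gb Q N (i+1) * Q ^ ((i+1).choose 2) * z ^ (i+1)
            = qPoch (-z) Q N - 1 := by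
          have h1 : ∑ k ∈ range (N+1+1), gb Q N k * Q ^ (k.choose 2) * z ^ k
              = qPoch (-z) Q N := by
            rw [Finset.sum_range_succ, gb_gt (by omega), ih]; ring
          rw [Finset.sum_range_succ'] at h1
          have h0' : gb Q N 0 * Q ^ (Nat.choose 0 2) * z ^ 0 = 1 := by simp [gb_zero hP]
          rw [h0'] at h1
          linear_combination h1
        rw [hrejoin, ← ih]
        ring
      rw [qPoch_succ]
      exact key.symm

lemma Hlem {Q : ℂ} (hP : ∀ n : ℕ, qPoch Q Q n ≠ 0) (B : ℂ) :
    ∀ (K : ℕ) (x : ℂ),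
      ∑ n ∈ range (K+1), (-1)^n * B^n * Q^(n.choose 2) * qPoch x Q n
        * qPoch (x*B*Q^n) Q (K-n) * gb Q K n = qPoch B Q K := by
  intro K
  induction K with
  | zero => intro x; simp [qPoch_zero, gb_self hP]
  | succ K ih =>
      intro x
      rw [Finset.sum_range_succ']
      have h0 : (-1)^0 * B^0 * Q^(Nat.choose 0 2) * qPoch x Q 0
          * qPoch (x*B*Q^0) Q (K+1-0) * gb Q (K+1) 0
          = qPoch (x*B) Q (K+1) := by
        simp [qPoch_zero, gb_zero hP]
      rw [h0]
      have hsplit : ∀ i ∈ range (K+1),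
          (-1)^(i+1) * B^(i+1) * Q^((i+1).choose 2) * qPoch x Q (i+1)
            * qPoch (x*B*Q^(i+1)) Q (K+1-(i+1)) * gb Q (K+1) (i+1)
          = (-1)^(i+1) * B^(i+1) * Q^((i+1).choose 2) * qPoch x Q (i+1)
            * qPoch (x*B*Q^(i+1)) Q (K+1-(i+1)) * gb Q K (i+1)
            + (-(B * (1-x) * Q^K)) * ((-1)^i * B^i * Q^(i.choose 2) * qPoch (x*Q) Q i
              * qPoch ((x*Q)*B*Q^i) Q (K-i) * gb Q K i) := by
        intro i hi
        simp only [Finset.mem_range] at hi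
        rw [gb_pascal hP, show K+1-(i+1) = K-i from by omega,
          qPoch_first x Q i, show x*B*Q^(i+1) = (x*Q)*B*Q^i from by rw [pow_succ]; ring]
        have hp : Q^((i+1).choose 2) * Q^(K-i) = Q^(i.choose 2) * Q^K := by
          rw [choose2_succ, ← pow_add, ← pow_add]; congr 1; omega
        linear_combination ((-1)^(i+1) * B^(i+1) * (1-x) * qPoch (x*Q) Q i
          * qPoch ((x*Q)*B*Q^i) Q (K-i) * gb Q K i) * hp
      rw [Finset.sum_congr rfl hsplit, Finset.sum_add_distrib, ← Finset.mul_sum, ih (x*Q)]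
      have hfirst : ∑ i ∈ range (K+1),
            (-1)^(i+1) * B^(i+1) * Q^((i+1).choose 2) * qPoch x Q (i+1)
              * qPoch (x*B*Q^(i+1)) Q (K+1-(i+1)) * gb Q K (i+1)
            + qPoch (x*B) Q (K+1)
          = (1 - x*B*Q^K) * qPoch B Q K := by
        have hxB : qPoch (x*B) Q (K+1)
            = (-1)^0 * B^0 * Q^(Nat.choose 0 2) * qPoch x Q 0
              * qPoch (x*B*Q^0) Q (K+1-0) * gb Q K 0 := by
          simp [qPoch_zero, gb_zero hP]
        rw [hxB, sum_shift (fun n => (-1)^n * B^n * Q^(n.choose 2) * qPoch x Q n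
          * qPoch (x*B*Q^n) Q (K+1-n) * gb Q K n) K (by simp [gb_gt (show K < K+1 by omega)])]
        have hfac : ∀ n ∈ range (K+1),
            (-1)^n * B^n * Q^(n.choose 2) * qPoch x Q n
              * qPoch (x*B*Q^n) Q (K+1-n) * gb Q K n
            = (1 - x*B*Q^K) * ((-1)^n * B^n * Q^(n.choose 2) * qPoch x Q n
              * qPoch (x*B*Q^n) Q (K-n) * gb Q K n) := by
          intro n hn
          simp only [Finset.mem_range] at hn
          rw [show K+1-n = (K-n)+1 from by omega, qPoch_succ]
          have harg : x*B*Q^n * Q^(K-n) = x*B*Q^K := by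
            rw [mul_assoc, ← pow_add]; congr 2; omega
          rw [harg]
          ring
        rw [Finset.sum_congr rfl hfac, ← Finset.mul_sum, ih x]
      linear_combination hfirst - qPoch_succ B Q K
end St8
namespace St8
open Finset

lemma qPoch_ne_zero_of {a Q : ℂ} (ha : ‖a‖ < 1) (hQ : ‖Q‖ ≤ 1) (n : ℕ) :
    qPoch a Q n ≠ 0 := by
  refine qPoch_ne_zero (fun k => ?_) n
  rw [norm_mul, norm_pow]
  calc ‖a‖ * ‖Q‖ ^ k
      ≤ ‖a‖ * 1 := by
        refine mul_le_mul_of_nonneg_left ?_ (norm_nonneg a)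
        exact pow_le_one₀ (norm_nonneg Q) hQ
    _ < 1 := by rw [mul_one]; exact ha

section qfacts
variable {q : ℂ}

lemma habs_pow (h1 : ‖q‖ < 1) {r : ℕ} (hr : 1 ≤ r) : ‖q^r‖ < 1 := by
  rw [norm_pow]
  exact pow_lt_one₀ (norm_nonneg q) h1 (by omega)

lemma hP6 (h1 : ‖q‖ < 1) : ∀ n : ℕ, qPoch (q^6) (q^6) n ≠ 0 :=
  qPoch_ne_zero_of (habs_pow (r := 6) h1 (by norm_num))
    (le_of_lt (habs_pow (r := 6) h1 (by norm_num)))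

lemma hC3 (h1 : ‖q‖ < 1) : ∀ n : ℕ, qPoch (-q^3) (q^6) n ≠ 0 := by
  refine qPoch_ne_zero_of ?_ (le_of_lt (habs_pow (r := 6) h1 (by norm_num)))
  rw [norm_neg]
  exact habs_pow (r := 3) h1 (by norm_num)

lemma hBne (h1 : ‖q‖ < 1) (j : ℕ) :
    ∀ n : ℕ, qPoch (-q^3 * (q^6)^j) (q^6) n ≠ 0 := by
  refine qPoch_ne_zero_of ?_ (le_of_lt (habs_pow (r := 6) h1 (by norm_num)))
  rw [norm_mul, norm_neg]
  have h6 : ‖(q^6)^j‖ ≤ 1 := by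
    rw [norm_pow]
    exact pow_le_one₀ (norm_nonneg _) (le_of_lt (habs_pow (r := 6) h1 (by norm_num)))
  have h3 : ‖q^3‖ < 1 := habs_pow (r := 3) h1 (by norm_num)
  nlinarith [norm_nonneg (q^3), norm_nonneg ((q^6)^j)]

lemma hShne (h1 : ‖q‖ < 1) (m : ℕ) (hm : 1 ≤ m) :
    ∀ n : ℕ, qPoch ((q^6)^m) (q^6) n ≠ 0 := by
  refine qPoch_ne_zero_of ?_ (le_of_lt (habs_pow (r := 6) h1 (by norm_num)))
  rw [norm_pow]
  exact pow_lt_one₀ (norm_nonneg _) (habs_pow (r := 6) h1 (by norm_num)) (by omega)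

lemma hpow_sq (q : ℂ) (j n : ℕ) :
    q^(3*(j+n)^2) = q^(3*j^2) * ((-1)^n * (-q^3*(q^6)^j)^n * (q^6)^(n.choose 2)) := by
  have h := choose2 n
  have he : 3*(j+n)^2 = 3*j^2 + (6*(j*n) + 3*(n.choose 2 + n.choose 2 + n)) := by
    rw [← h]; ring
  rw [he, pow_add]
  congr 1
  have hB : (-1:ℂ)^n * (-q^3*(q^6)^j)^n = (q^3*(q^6)^j)^n := by
    rw [← neg_pow]
    congr 1
    ring
  rw [hB, mul_pow, ← pow_mul, ← pow_mul, ← pow_mul, ← pow_mul, ← pow_add, ← pow_add]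
  congr 1
  ring

lemma star (h1 : ‖q‖ < 1) (j M : ℕ) (hjM : j ≤ M) :
    ∑ m ∈ range (M+1), q^(3*m^2) * qPoch (-q^3) (q^6) m
        * invPoch (q^6) (q^6) ((M:ℤ)-(m:ℤ))
        * (invPoch (q^6) (q^6) ((m:ℤ)-(j:ℤ)) * invPoch (q^6) (q^6) ((m:ℤ)+(j:ℤ)))
    = q^(3*j^2) * qPoch (-q^3) (q^6) M
        * (invPoch (q^6) (q^6) ((M:ℤ)-(j:ℤ)) * invPoch (q^6) (q^6) ((M:ℤ)+(j:ℤ))) := by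
  have hP := hP6 h1
  obtain ⟨K, rfl⟩ : ∃ K, M = j + K := ⟨M - j, by omega⟩
  rw [show j + K + 1 = j + (K+1) from by omega, Finset.sum_range_add]
  have hzero : ∑ m ∈ range j, q^(3*m^2) * qPoch (-q^3) (q^6) m
      * invPoch (q^6) (q^6) (((j+K:ℕ):ℤ)-(m:ℤ))
      * (invPoch (q^6) (q^6) ((m:ℤ)-(j:ℤ)) * invPoch (q^6) (q^6) ((m:ℤ)+(j:ℤ))) = 0 := by
    refine Finset.sum_eq_zero fun m hm => ?_
    simp only [Finset.mem_range] at hm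
    rw [invPoch_neg _ _ (show (m:ℤ)-(j:ℤ) < 0 by omega)]
    ring
  rw [hzero, zero_add]
  refine mul_right_cancel₀ (hBne h1 j K) ?_
  rw [Finset.sum_mul]
  have hterm : ∀ n ∈ range (K+1),
      q^(3*(j+n)^2) * qPoch (-q^3) (q^6) (j+n)
        * invPoch (q^6) (q^6) (((j+K:ℕ):ℤ)-((j+n:ℕ):ℤ))
        * (invPoch (q^6) (q^6) (((j+n:ℕ):ℤ)-(j:ℤ)) * invPoch (q^6) (q^6) (((j+n:ℕ):ℤ)+(j:ℤ)))
        * qPoch (-q^3 * (q^6)^j) (q^6) K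
      = (q^(3*j^2) * qPoch (-q^3) (q^6) (j+K)
          * (invPoch (q^6) (q^6) (((j+K:ℕ):ℤ)-(j:ℤ)) * invPoch (q^6) (q^6) (((j+K:ℕ):ℤ)+(j:ℤ))))
        * ((-1)^n * (-q^3 * (q^6)^j)^n * (q^6)^(n.choose 2) * qPoch (-q^3 * (q^6)^j) (q^6) n
            * qPoch ((-q^3 * (q^6)^j) * (-q^3 * (q^6)^j) * (q^6)^n) (q^6) (K-n)
            * gb (q^6) K n) := by
    intro n hn
    simp only [Finset.mem_range] at hn
    have hnK : n ≤ K := by omega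
    rw [show (((j+K:ℕ):ℤ)-((j+n:ℕ):ℤ)) = ((K-n : ℕ):ℤ) from by push_cast; omega,
      show (((j+n:ℕ):ℤ)-(j:ℤ)) = ((n:ℕ):ℤ) from by push_cast; omega,
      show (((j+n:ℕ):ℤ)+(j:ℤ)) = ((2*j+n : ℕ):ℤ) from by push_cast; omega,
      show (((j+K:ℕ):ℤ)-(j:ℤ)) = ((K:ℕ):ℤ) from by push_cast; omega,
      show (((j+K:ℕ):ℤ)+(j:ℤ)) = ((2*j+K : ℕ):ℤ) from by push_cast; omega,
      invPoch_ofNat, invPoch_ofNat, invPoch_ofNat, invPoch_ofNat, invPoch_ofNat]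
    rw [qPoch_shift (-q^3) (q^6) j n, qPoch_shift (-q^3) (q^6) j K]
    rw [show 2*j+K = (2*j+n) + (K-n) from by omega, qPoch_shift (q^6) (q^6) (2*j+n) (K-n),
      ← pow_succ']
    rw [show (-q^3 * (q^6)^j) * (-q^3 * (q^6)^j) * (q^6)^n = (q^6)^(2*j+n+1) from by ring]
    rw [gb, if_pos hnK]
    rw [hpow_sq q j n]
    have d1 := hP n
    have d2 := hP (K-n)
    have d3 := hP (2*j+n)
    have d4 := hP K
    have d5 := hShne h1 (2*j+n+1) (by omega) (K-n)
    field_simp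
  rw [Finset.sum_congr rfl hterm, ← Finset.mul_sum, Hlem hP (-q^3 * (q^6)^j) K (-q^3 * (q^6)^j)]

end qfacts
end St8
namespace St8
open Finset

section qfacts2
variable {q : ℂ}

lemma star_int (h1 : ‖q‖ < 1) (M : ℕ) (j : ℤ) (hj1 : -(M:ℤ) ≤ j) (hj2 : j ≤ (M:ℤ)) :
    ∑ m ∈ range (M+1), q^(3*m^2) * qPoch (-q^3) (q^6) m
        * invPoch (q^6) (q^6) ((M:ℤ)-(m:ℤ))
        * (invPoch (q^6) (q^6) ((m:ℤ)-j) * invPoch (q^6) (q^6) ((m:ℤ)+j))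
    = q^(3*j.natAbs^2) * qPoch (-q^3) (q^6) M
        * (invPoch (q^6) (q^6) ((M:ℤ)-j) * invPoch (q^6) (q^6) ((M:ℤ)+j)) := by
  rcases Int.natAbs_eq j with h | h
  · rw [h]
    exact star h1 j.natAbs M (by omega)
  · rw [h]
    simp only [sub_neg_eq_add, ← sub_eq_add_neg]
    have hcomm : ∀ m ∈ range (M+1),
        q^(3*m^2) * qPoch (-q^3) (q^6) m * invPoch (q^6) (q^6) ((M:ℤ)-(m:ℤ))
          * (invPoch (q^6) (q^6) ((m:ℤ)+(j.natAbs:ℤ)) * invPoch (q^6) (q^6) ((m:ℤ)-(j.natAbs:ℤ)))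
        = q^(3*m^2) * qPoch (-q^3) (q^6) m * invPoch (q^6) (q^6) ((M:ℤ)-(m:ℤ))
          * (invPoch (q^6) (q^6) ((m:ℤ)-(j.natAbs:ℤ)) * invPoch (q^6) (q^6) ((m:ℤ)+(j.natAbs:ℤ))) :=
      fun m _ => by ring
    rw [Finset.sum_congr rfl hcomm, star h1 j.natAbs M (by omega)]
    simp only [Int.natAbs_neg, Int.natAbs_natCast]
    ring

lemma SW (h1 : ‖q‖ < 1) (C : ℤ → ℂ) (M : ℕ) :
    ∑ m ∈ range (M+1), q^(3*m^2) * qPoch (-q^3) (q^6) m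
        * invPoch (q^6) (q^6) ((M:ℤ)-(m:ℤ))
        * (∑ j ∈ Icc (-(m:ℤ)) (m:ℤ), C j
            * (invPoch (q^6) (q^6) ((m:ℤ)-j) * invPoch (q^6) (q^6) ((m:ℤ)+j)))
    = qPoch (-q^3) (q^6) M
        * ∑ j ∈ Icc (-(M:ℤ)) (M:ℤ), C j * q^(3*j.natAbs^2)
            * (invPoch (q^6) (q^6) ((M:ℤ)-j) * invPoch (q^6) (q^6) ((M:ℤ)+j)) := by
  have hstep : ∀ m ∈ range (M+1),
      q^(3*m^2) * qPoch (-q^3) (q^6) m * invPoch (q^6) (q^6) ((M:ℤ)-(m:ℤ))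
        * (∑ j ∈ Icc (-(m:ℤ)) (m:ℤ), C j
            * (invPoch (q^6) (q^6) ((m:ℤ)-j) * invPoch (q^6) (q^6) ((m:ℤ)+j)))
      = ∑ j ∈ Icc (-(M:ℤ)) (M:ℤ), C j * (q^(3*m^2) * qPoch (-q^3) (q^6) m
          * invPoch (q^6) (q^6) ((M:ℤ)-(m:ℤ))
          * (invPoch (q^6) (q^6) ((m:ℤ)-j) * invPoch (q^6) (q^6) ((m:ℤ)+j))) := by
    intro m hm
    simp only [Finset.mem_range] at hm
    have hext : ∑ j ∈ Icc (-(m:ℤ)) (m:ℤ), C j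
          * (invPoch (q^6) (q^6) ((m:ℤ)-j) * invPoch (q^6) (q^6) ((m:ℤ)+j))
        = ∑ j ∈ Icc (-(M:ℤ)) (M:ℤ), C j
          * (invPoch (q^6) (q^6) ((m:ℤ)-j) * invPoch (q^6) (q^6) ((m:ℤ)+j)) := by
      refine Finset.sum_subset (Finset.Icc_subset_Icc (by omega) (by omega)) ?_
      intro j hjM hjm
      simp only [Finset.mem_Icc] at hjM hjm
      by_cases hcase : (m:ℤ) < j
      · rw [invPoch_neg _ _ (show (m:ℤ)-j < 0 by omega)]
        ring
      · rw [invPoch_neg _ _ (show (m:ℤ)+j < 0 by omega)]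
        ring
    rw [hext, Finset.mul_sum]
    exact Finset.sum_congr rfl fun j _ => by ring
  rw [Finset.sum_congr rfl hstep, Finset.sum_comm]
  have hj : ∀ j ∈ Icc (-(M:ℤ)) (M:ℤ),
      ∑ m ∈ range (M+1), C j * (q^(3*m^2) * qPoch (-q^3) (q^6) m
          * invPoch (q^6) (q^6) ((M:ℤ)-(m:ℤ))
          * (invPoch (q^6) (q^6) ((m:ℤ)-j) * invPoch (q^6) (q^6) ((m:ℤ)+j)))
      = C j * (q^(3*j.natAbs^2) * qPoch (-q^3) (q^6) M
          * (invPoch (q^6) (q^6) ((M:ℤ)-j) * invPoch (q^6) (q^6) ((M:ℤ)+j))) := by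
    intro j hjM
    simp only [Finset.mem_Icc] at hjM
    rw [← Finset.mul_sum, star_int h1 M j hjM.1 hjM.2]
  rw [Finset.sum_congr rfl hj, Finset.mul_sum]
  exact Finset.sum_congr rfl fun j _ => by ring

end qfacts2
end St8
namespace St8
open Finset

section qfacts3
variable {q : ℂ}

lemma split3 (q : ℂ) (n : ℕ) :
    qPoch (-q) (q^2) (3*n)
      = qPoch (-q) (q^6) n * qPoch (-q^3) (q^6) n * qPoch (-(q^5)) (q^6) n := by
  induction n with
  | zero => simp [qPoch_zero]
  | succ n ih =>
      rw [show 3*(n+1) = (3*n+1+1)+1 from by ring, qPoch_succ, qPoch_succ,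
        show 3*n+1 = (3*n)+1 from rfl, qPoch_succ, ih,
        qPoch_succ (-q) (q^6) n, qPoch_succ (-q^3) (q^6) n, qPoch_succ (-(q^5)) (q^6) n]
      ring

lemma sum65 (n : ℕ) : ∑ i ∈ range n, (6*i+5) = 3*n^2+2*n := by
  induction n with
  | zero => simp
  | succ n ih => rw [Finset.sum_range_succ, ih]; ring

lemma key2a (h0 : q ≠ 0) (n : ℕ) :
    q^(3*n^2+2*n) * qPoch (-(q * (q^(6*n))⁻¹)) (q^6) (2*n)
      = qPoch (-(q^5)) (q^6) n * qPoch (-q) (q^6) n := by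
  rw [qPoch, show 2*n = n + n from by ring, Finset.prod_range_add]
  have h2 : ∀ i ∈ range n, (1 - (-(q * (q^(6*n))⁻¹)) * (q^6)^(n+i))
      = 1 - (-q) * (q^6)^i := by
    intro i _
    have : q * (q^(6*n))⁻¹ * (q^6)^(n+i) = q * (q^6)^i := by
      rw [pow_add, show (q^6)^n = q^(6*n) from by rw [← pow_mul]]
      field_simp
    rw [show (-(q * (q^(6*n))⁻¹)) * (q^6)^(n+i) = -(q * (q^(6*n))⁻¹ * (q^6)^(n+i)) from by ring,
      this]
    ring
  rw [Finset.prod_congr rfl h2]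
  have h1' : ∀ i ∈ range n, (1 - (-(q * (q^(6*n))⁻¹)) * (q^6)^i)
      = (q^(6*(n-1-i)+5))⁻¹ * (1 + q^(6*(n-1-i)+5)) := by
    intro i hi
    simp only [Finset.mem_range] at hi
    have hne : q^(6*(n-1-i)+5) ≠ 0 := pow_ne_zero _ h0
    have hne2 : q^(6*n) ≠ 0 := pow_ne_zero _ h0
    have hprod : q^(6*(n-1-i)+5) * q * q^(6*i) = q^(6*n) := by
      conv_rhs => rw [show 6*n = (6*(n-1-i)+5) + 1 + 6*i from by omega, pow_add, pow_add,
        pow_one]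
    have hkey : (-(q * (q^(6*n))⁻¹)) * (q^6)^i = -((q^(6*(n-1-i)+5))⁻¹) := by
      rw [show (q^6)^i = q^(6*i) from by rw [← pow_mul]]
      rw [show (-(q * (q^(6*n))⁻¹)) * q^(6*i) = -(q * (q^(6*n))⁻¹ * q^(6*i)) from by ring]
      congr 1
      refine eq_inv_of_mul_eq_one_right ?_
      rw [show q^(6*(n-1-i)+5) * (q * (q^(6*n))⁻¹ * q^(6*i))
          = (q^(6*(n-1-i)+5) * q * q^(6*i)) * (q^(6*n))⁻¹ from by ring,
        hprod, mul_inv_cancel₀ hne2]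
    rw [hkey, mul_add, mul_one, inv_mul_cancel₀ hne]
    ring
  rw [Finset.prod_congr rfl h1', Finset.prod_mul_distrib, Finset.prod_inv_distrib,
    Finset.prod_pow_eq_pow_sum]
  have hsum : ∑ i ∈ range n, (6*(n-1-i)+5) = 3*n^2+2*n := by
    rw [Finset.sum_range_reflect (fun j => 6*j+5) n, sum65]
  rw [hsum]
  have hq5 : ∀ i ∈ range n, (1 + q^(6*(n-1-i)+5))
      = (fun j => 1 - (-(q^5)) * (q^6)^j) (n-1-i) := by
    intro i _
    simp only
    rw [show (q^6)^(n-1-i) = q^(6*(n-1-i)) from by rw [← pow_mul]]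
    rw [show (-(q^5)) * q^(6*(n-1-i)) = -(q^(6*(n-1-i)+5)) from by rw [pow_add]; ring]
    ring
  rw [Finset.prod_congr rfl hq5, Finset.prod_range_reflect (fun j => 1 - (-(q^5)) * (q^6)^j) n]
  have hpoch : ∏ j ∈ range n, (1 - (-(q^5)) * (q^6)^j) = qPoch (-(q^5)) (q^6) n := rfl
  have hpoch2 : ∏ i ∈ range n, (1 - (-q) * (q^6)^i) = qPoch (-q) (q^6) n := rfl
  rw [hpoch, hpoch2]
  have hA : (q^(3*n^2+2*n)) ≠ 0 := pow_ne_zero _ h0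
  field_simp
  ring

end qfacts3
end St8
namespace St8
open Finset

section qfacts4
variable {q : ℂ}

lemma key2 (h0 : q ≠ 0) (h1 : ‖q‖ < 1) (n : ℕ) :
    qPoch (-q) (q^6) n * qPoch (-(q^5)) (q^6) n * invPoch (q^6) (q^6) (2*(n:ℤ))
    = ∑ j ∈ Icc (-(n:ℤ)) (n:ℤ),
        q^(3*j^2+2*j) * (invPoch (q^6) (q^6) ((n:ℤ)-j) * invPoch (q^6) (q^6) ((n:ℤ)+j)) := by
  have hP := hP6 h1
  have hz : q * (q^(6*n))⁻¹ = q ^ ((1:ℤ) - 6*(n:ℤ)) := by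
    rw [zpow_sub₀ h0, zpow_one, show (6*(n:ℤ)) = ((6*n : ℕ) : ℤ) from by push_cast; ring,
      zpow_natCast, div_eq_mul_inv]
  have hstart : qPoch (-q) (q^6) n * qPoch (-(q^5)) (q^6) n * invPoch (q^6) (q^6) (2*(n:ℤ))
      = ∑ k ∈ range (2*n+1),
          q^(3*n^2+2*n) * (gb (q^6) (2*n) k * (q^6)^(k.choose 2) * (q * (q^(6*n))⁻¹)^k)
            * invPoch (q^6) (q^6) (2*(n:ℤ)) := by
    rw [show qPoch (-q) (q^6) n * qPoch (-(q^5)) (q^6) n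
        = qPoch (-(q^5)) (q^6) n * qPoch (-q) (q^6) n from by ring, ← key2a h0 n,
      qbt hP (q * (q^(6*n))⁻¹) (2*n), Finset.mul_sum, Finset.sum_mul]
  rw [hstart]
  refine Finset.sum_nbij' (i := fun k => (n:ℤ) - (k:ℤ)) (j := fun j => ((n:ℤ) - j).toNat)
    ?_ ?_ ?_ ?_ ?_
  · intro k hk
    simp only [Finset.mem_range] at hk
    simp only [Finset.mem_Icc]
    omega
  · intro j hj
    simp only [Finset.mem_Icc] at hj
    simp only [Finset.mem_range]
    omega
  · intro k hk
    simp only [Finset.mem_range] at hk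
    omega
  · intro j hj
    simp only [Finset.mem_Icc] at hj
    omega
  · intro k hk
    simp only [Finset.mem_range] at hk
    have hk2 : k ≤ 2*n := by omega
    have hpow : q^(3*n^2+2*n) * ((q^6)^(k.choose 2) * (q * (q^(6*n))⁻¹)^k)
        = q^(3*((n:ℤ)-(k:ℤ))^2+2*((n:ℤ)-(k:ℤ))) := by
      have hch := choose2 k
      have hE : ((3*n^2+2*n : ℕ):ℤ) + ((((6*(k.choose 2) : ℕ)):ℤ) + ((1:ℤ)-6*(n:ℤ))*(k:ℤ))
          = 3*((n:ℤ)-(k:ℤ))^2+2*((n:ℤ)-(k:ℤ)) := by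
        have h' : ((k:ℤ))*(k:ℤ) = ((k.choose 2 : ℕ):ℤ) + ((k.choose 2 : ℕ):ℤ) + (k:ℤ) := by
          exact_mod_cast congrArg (Nat.cast : ℕ → ℤ) hch
        push_cast
        push_cast at h'
        linear_combination (-3 : ℤ) * h'
      rw [hz, ← zpow_natCast (q ^ ((1:ℤ) - 6*(n:ℤ))) k, ← zpow_mul,
        show (q:ℂ)^(3*n^2+2*n) = q^(((3*n^2+2*n : ℕ)):ℤ) from (zpow_natCast q _).symm,
        show ((q:ℂ)^6)^(k.choose 2) = q^(((6*(k.choose 2) : ℕ)):ℤ) from by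
          rw [← pow_mul, zpow_natCast],
        ← zpow_add₀ h0, ← zpow_add₀ h0, hE]
    rw [show (n:ℤ) - ((n:ℤ) - (k:ℤ)) = ((k:ℕ):ℤ) from by ring,
      show (n:ℤ) + ((n:ℤ) - (k:ℤ)) = ((2*n-k : ℕ):ℤ) from by push_cast; omega,
      show (2*(n:ℤ)) = ((2*n : ℕ):ℤ) from by push_cast; ring,
      invPoch_ofNat, invPoch_ofNat, invPoch_ofNat, gb, if_pos hk2, ← hpow]
    have d1 := hP k
    have d2 := hP (2*n-k)
    have d3 := hP (2*n)
    field_simp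

end qfacts4
end St8
namespace St8
open Finset

noncomputable def Rfun (q : ℂ) (d M : ℕ) : ℂ :=
  qPoch (-q^3) (q^6) M * ∑ j ∈ Icc (-(M:ℤ)) (M:ℤ),
    q^(3*((d:ℤ)+2)*j^2+2*j)
      * (invPoch (q^6) (q^6) ((M:ℤ)-j) * invPoch (q^6) (q^6) ((M:ℤ)+j))

section qfacts5
variable {q : ℂ}

lemma natAbs_pow_eq (h0 : q ≠ 0) (j : ℤ) : (q : ℂ)^(3*j.natAbs^2) = q^((3*j^2 : ℤ)) := by
  rw [← zpow_natCast]
  congr 1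
  push_cast
  rw [sq_abs]

lemma base (h0 : q ≠ 0) (h1 : ‖q‖ < 1) (M : ℕ) :
    ∑ m ∈ range (M+1), q^(3*m^2) * qPoch (-q) (q^2) (3*m)
      * invPoch (q^6) (q^6) ((M:ℤ)-(m:ℤ)) * invPoch (q^6) (q^6) (2*(m:ℤ))
    = Rfun q 0 M := by
  have hterm : ∀ m ∈ range (M+1),
      q^(3*m^2) * qPoch (-q) (q^2) (3*m)
        * invPoch (q^6) (q^6) ((M:ℤ)-(m:ℤ)) * invPoch (q^6) (q^6) (2*(m:ℤ))
      = q^(3*m^2) * qPoch (-q^3) (q^6) m * invPoch (q^6) (q^6) ((M:ℤ)-(m:ℤ))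
        * (∑ j ∈ Icc (-(m:ℤ)) (m:ℤ), (fun j => (q:ℂ)^(3*j^2+2*j)) j
            * (invPoch (q^6) (q^6) ((m:ℤ)-j) * invPoch (q^6) (q^6) ((m:ℤ)+j))) := by
    intro m _
    simp only []
    rw [split3, ← key2 h0 h1 m]
    ring
  rw [Finset.sum_congr rfl hterm, SW h1 (fun j => (q:ℂ)^(3*j^2+2*j)) M, Rfun]
  congr 1
  refine Finset.sum_congr rfl fun j _ => ?_
  rw [natAbs_pow_eq h0 j]
  have hcomb : (q:ℂ)^((3*j^2:ℤ)) * q^(3*j^2+2*j) = q^(3*(((0:ℕ):ℤ)+2)*j^2+2*j) := by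
    rw [← zpow_add₀ h0]; congr 1; push_cast; ring
  linear_combination (invPoch (q^6) (q^6) ((M:ℤ)-j) * invPoch (q^6) (q^6) ((M:ℤ)+j)) * hcomb

lemma Rrec (h0 : q ≠ 0) (h1 : ‖q‖ < 1) (d M : ℕ) :
    ∑ m ∈ range (M+1), q^(3*m^2) * invPoch (q^6) (q^6) ((M:ℤ)-(m:ℤ)) * Rfun q d m
      = Rfun q (d+1) M := by
  have hterm : ∀ m ∈ range (M+1),
      q^(3*m^2) * invPoch (q^6) (q^6) ((M:ℤ)-(m:ℤ)) * Rfun q d m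
      = q^(3*m^2) * qPoch (-q^3) (q^6) m * invPoch (q^6) (q^6) ((M:ℤ)-(m:ℤ))
        * (∑ j ∈ Icc (-(m:ℤ)) (m:ℤ), (fun j => (q:ℂ)^(3*((d:ℤ)+2)*j^2+2*j)) j
            * (invPoch (q^6) (q^6) ((m:ℤ)-j) * invPoch (q^6) (q^6) ((m:ℤ)+j))) := by
    intro m _
    simp only [Rfun]
    rw [Finset.mul_sum, Finset.mul_sum, Finset.mul_sum]
    refine Finset.sum_congr rfl fun j _ => by ring
  rw [Finset.sum_congr rfl hterm, SW h1 (fun j => (q:ℂ)^(3*((d:ℤ)+2)*j^2+2*j)) M, Rfun]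
  congr 1
  refine Finset.sum_congr rfl fun j _ => ?_
  rw [natAbs_pow_eq h0 j]
  have hcomb : (q:ℂ)^((3*j^2:ℤ)) * q^(3*((d:ℤ)+2)*j^2+2*j) = q^(3*(((d+1:ℕ):ℤ)+2)*j^2+2*j) := by
    rw [← zpow_add₀ h0]; congr 1; push_cast; ring
  linear_combination (invPoch (q^6) (q^6) ((M:ℤ)-j) * invPoch (q^6) (q^6) ((M:ℤ)+j)) * hcomb

end qfacts5
end St8
namespace St8
open Finset

noncomputable def trm (q : ℂ) (M : ℕ) {ν : ℕ} (n : Fin (ν+1) → ℕ) : ℂ :=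
  q ^ (3 * ∑ k, (Nsum n k)^2) * qPoch (-q) (q^2) (3 * n (Fin.last ν))
    * invPoch (q^6) (q^6) ((M:ℤ) - (Nsum n 0 : ℤ))
    * (∏ k : Fin (ν+1), if (k:ℕ) < ν then invPoch (q^6) (q^6) (n k : ℤ) else 1)
    * invPoch (q^6) (q^6) (2 * (n (Fin.last ν) : ℤ))

noncomputable def Lfun (q : ℂ) (d M : ℕ) : ℂ :=
  ∑ n ∈ Fintype.piFinset (fun _ : Fin (d+1) => range (M+1)), trm q M n

lemma Nsum_zero {ν : ℕ} (n : Fin (ν+1) → ℕ) : Nsum n 0 = ∑ l, n l := by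
  unfold Nsum
  exact Finset.sum_congr rfl fun l _ => if_pos (Fin.zero_le l)

lemma Nsum_succ {ν : ℕ} (n : Fin (ν+1) → ℕ) (k : Fin ν) :
    Nsum n k.succ = Nsum (Fin.tail n) k := by
  unfold Nsum
  rw [Fin.sum_univ_succ]
  have h0 : (if k.succ ≤ 0 then n 0 else 0) = 0 := by
    rw [if_neg]
    simp [Fin.le_def]
  rw [h0, zero_add]
  refine Finset.sum_congr rfl fun l _ => ?_
  exact if_congr Fin.succ_le_succ_iff rfl rfl

lemma trm_ne_zero_imp {ν M : ℕ} {q : ℂ} {n : Fin (ν+1) → ℕ} (h : trm q M n ≠ 0) :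
    ∑ l, n l ≤ M := by
  by_contra hc
  refine h ?_
  unfold trm
  rw [invPoch_neg _ _ (show (M:ℤ) - (Nsum n 0 : ℤ) < 0 by
    rw [Nsum_zero]; omega)]
  ring

lemma L_filter (q : ℂ) (d M : ℕ) :
    Lfun q d M = ∑ n ∈ (Fintype.piFinset (fun _ : Fin (d+1) => range (M+1))).filter
      (fun n => ∑ l, n l ≤ M), trm q M n := by
  refine (Finset.sum_filter_of_ne fun n _ hne => ?_).symm
  exact trm_ne_zero_imp hne

lemma trm_split (q : ℂ) (M : ℕ) {d : ℕ} (n : Fin (d+2) → ℕ) :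
    trm q M n = q^(3*(∑ l, n l)^2)
      * invPoch (q^6) (q^6) ((M:ℤ) - ((∑ l, n l : ℕ):ℤ))
      * trm q (∑ l, n l) (Fin.tail n) := by
  unfold trm
  have hsum : ∑ l, n l = n 0 + ∑ l, Fin.tail n l := by
    rw [Fin.sum_univ_succ]; rfl
  have hNs : ∑ k : Fin (d+2), (Nsum n k)^2
      = (∑ l, n l)^2 + ∑ k : Fin (d+1), (Nsum (Fin.tail n) k)^2 := by
    rw [Fin.sum_univ_succ, Nsum_zero]
    congr 1
    exact Finset.sum_congr rfl fun k _ => by rw [Nsum_succ]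
  have hlast : n (Fin.last (d+1)) = Fin.tail n (Fin.last d) := by
    simp [Fin.tail, Fin.succ_last]
  have hprod : (∏ k : Fin (d+2), if (k:ℕ) < d+1 then invPoch (q^6) (q^6) (n k : ℤ) else 1)
      = invPoch (q^6) (q^6) (n 0 : ℤ)
        * ∏ k : Fin (d+1), (if (k:ℕ) < d then invPoch (q^6) (q^6) (Fin.tail n k : ℤ) else 1) := by
    rw [Fin.prod_univ_succ]
    congr 1
    · refine Finset.prod_congr rfl fun k _ => ?_
      have hc : ((k.succ : Fin (d+2)) : ℕ) < d+1 ↔ (k:ℕ) < d := by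
        rw [Fin.val_succ]; omega
      rw [if_congr hc rfl rfl]
      rfl
  have hiE : invPoch (q^6) (q^6) (((∑ l, n l : ℕ):ℤ) - (Nsum (Fin.tail n) 0 : ℤ))
      = invPoch (q^6) (q^6) (n 0 : ℤ) := by
    congr 1
    rw [Nsum_zero, hsum]
    push_cast
    ring
  rw [hNs, hlast, Nsum_zero, hprod, hiE,
    show 3*((∑ l, n l)^2 + ∑ k : Fin (d+1), (Nsum (Fin.tail n) k)^2)
      = 3*(∑ l, n l)^2 + 3*(∑ k : Fin (d+1), (Nsum (Fin.tail n) k)^2) from by ring,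
    pow_add]
  ring

end St8
namespace St8
open Finset

lemma Lrec (q : ℂ) (d M : ℕ) :
    Lfun q (d+1) M = ∑ m ∈ range (M+1),
      q^(3*m^2) * invPoch (q^6) (q^6) ((M:ℤ)-(m:ℤ)) * Lfun q d m := by
  have hR : ∀ m ∈ range (M+1),
      q^(3*m^2) * invPoch (q^6) (q^6) ((M:ℤ)-(m:ℤ)) * Lfun q d m
      = ∑ r ∈ (Fintype.piFinset (fun _ : Fin (d+1) => range (m+1))).filter
          (fun r => ∑ l, r l ≤ m),
          q^(3*m^2) * invPoch (q^6) (q^6) ((M:ℤ)-(m:ℤ)) * trm q m r := by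
    intro m _
    rw [L_filter, Finset.mul_sum]
  rw [Finset.sum_congr rfl hR, L_filter]
  have hsig : ∑ p ∈ (range (M+1)).sigma (fun m =>
        (Fintype.piFinset (fun _ : Fin (d+1) => range (m+1))).filter (fun r => ∑ l, r l ≤ m)),
        (q^(3*p.1^2) * invPoch (q^6) (q^6) ((M:ℤ)-(p.1:ℤ)) * trm q p.1 p.2)
      = ∑ m ∈ range (M+1), ∑ r ∈ (Fintype.piFinset (fun _ : Fin (d+1) =>
          range (m+1))).filter (fun r => ∑ l, r l ≤ m),
          q^(3*m^2) * invPoch (q^6) (q^6) ((M:ℤ)-(m:ℤ)) * trm q m r :=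
    Finset.sum_sigma _ _ _
  rw [← hsig]
  refine Finset.sum_nbij' (i := fun n => (⟨∑ l, n l, Fin.tail n⟩ : Σ _ : ℕ, Fin (d+1) → ℕ))
    (j := fun p => Fin.cons (p.1 - ∑ l, p.2 l) p.2) ?_ ?_ ?_ ?_ ?_
  · intro n hn
    simp only [Finset.mem_filter, Fintype.mem_piFinset, Finset.mem_range] at hn
    simp only [Finset.mem_sigma, Finset.mem_filter, Fintype.mem_piFinset, Finset.mem_range]
    have hsum : ∑ l, n l = n 0 + ∑ l, Fin.tail n l := by
      rw [Fin.sum_univ_succ]; rfl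
    have hle : ∀ k : Fin (d+1), Fin.tail n k ≤ ∑ l, n l := by
      intro k
      exact Finset.single_le_sum (f := n) (fun i _ => Nat.zero_le _) (Finset.mem_univ k.succ)
    exact ⟨by omega, fun k => by have := hle k; omega, by omega⟩
  · intro p hp
    simp only [Finset.mem_sigma, Finset.mem_filter, Fintype.mem_piFinset,
      Finset.mem_range] at hp
    obtain ⟨hp1, hp2, hp3⟩ := hp
    simp only [Finset.mem_filter, Fintype.mem_piFinset, Finset.mem_range]
    have hsum : ∑ l, Fin.cons (p.1 - ∑ l, p.2 l) p.2 l = p.1 := by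
      rw [Fin.sum_cons]
      omega
    constructor
    · intro k
      refine Fin.cases ?_ ?_ k
      · simp only [Fin.cons_zero]
        omega
      · intro i
        simp only [Fin.cons_succ]
        have := hp2 i
        omega
    · omega
  · intro n hn
    simp only [Finset.mem_filter, Fintype.mem_piFinset, Finset.mem_range] at hn
    have hsum : ∑ l, n l = n 0 + ∑ l, Fin.tail n l := by
      rw [Fin.sum_univ_succ]; rfl
    simp only [Fin.tail_cons]
    rw [show (∑ l, n l) - (∑ l, Fin.tail n l) = n 0 from by omega]
    exact Fin.cons_self_tail n
  · intro p hp
    simp only [Finset.mem_sigma, Finset.mem_filter, Fintype.mem_piFinset,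
      Finset.mem_range] at hp
    obtain ⟨hp1, hp2, hp3⟩ := hp
    have hsum : ∑ l, Fin.cons (p.1 - ∑ l, p.2 l) p.2 l = p.1 := by
      rw [Fin.sum_cons]
      omega
    simp only [Fin.tail_cons]
    rw [hsum]
  · intro n hn
    simp only [Finset.mem_filter, Fintype.mem_piFinset, Finset.mem_range] at hn
    exact trm_split q M n

lemma Lbase (q : ℂ) (M : ℕ) :
    Lfun q 0 M = ∑ m ∈ range (M+1), q^(3*m^2) * qPoch (-q) (q^2) (3*m)
      * invPoch (q^6) (q^6) ((M:ℤ)-(m:ℤ)) * invPoch (q^6) (q^6) (2*(m:ℤ)) := by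
  unfold Lfun
  refine Finset.sum_nbij' (i := fun n => n 0) (j := fun m => fun _ => m) ?_ ?_ ?_ ?_ ?_
  · intro n hn
    simp only [Fintype.mem_piFinset] at hn
    exact hn 0
  · intro m hm
    simp only [Fintype.mem_piFinset]
    intro i
    exact hm
  · intro n _
    funext i
    have hi : i = 0 := Fin.ext (by have := i.isLt; omega)
    rw [hi]
  · intro m _
    rfl
  · intro n _
    unfold trm
    have h1 : ∑ k : Fin 1, (Nsum n k)^2 = (n 0)^2 := by
      rw [Fin.sum_univ_one, Nsum_zero, Fin.sum_univ_one]
    have h2 : Nsum n 0 = n 0 := by rw [Nsum_zero, Fin.sum_univ_one]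
    have h3 : (∏ k : Fin 1, if (k:ℕ) < 0 then invPoch (q^6) (q^6) (n k : ℤ) else 1) = 1 := by
      rw [Fin.prod_univ_one, if_neg (by omega)]
    rw [h1, h2, h3, show Fin.last 0 = 0 from rfl, mul_one]

lemma Lmain {q : ℂ} (h0 : q ≠ 0) (h1 : ‖q‖ < 1) :
    ∀ d M : ℕ, Lfun q d M = Rfun q d M := by
  intro d
  induction d with
  | zero =>
      intro M
      rw [Lbase, base h0 h1 M]
  | succ d ih =>
      intro M
      rw [Lrec, Finset.sum_congr rfl (fun m _ => by rw [ih m]), Rrec h0 h1 d M]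

end St8

namespace St8
open Finset

lemma Rconv {q : ℂ} (h0 : q ≠ 0) (h1 : ‖q‖ < 1) (d M : ℕ) :
    Rfun q d M = qPoch (-q^3) (q^6) M / qPoch (q^6) (q^6) (2*M)
      * ∑ j ∈ Icc (-(M:ℤ)) (M:ℤ),
          q^(3*(((d+1:ℕ):ℤ)+1)*j^2+2*j) * qBinom (q^6) (2*(M:ℤ)) ((M:ℤ)+j) := by
  have hP := hP6 h1
  rw [Rfun, Finset.mul_sum, Finset.mul_sum]
  refine Finset.sum_congr rfl fun j hj => ?_
  simp only [Finset.mem_Icc] at hj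
  rw [qBinom, if_pos (by constructor <;> omega)]
  rw [show 2*(M:ℤ) - ((M:ℤ)+j) = (M:ℤ)-j from by ring]
  rw [show ((2*(M:ℤ)).toNat) = 2*M from by omega]
  rw [invPoch, if_pos (show (0:ℤ) ≤ (M:ℤ)-j by omega),
    invPoch, if_pos (show (0:ℤ) ≤ (M:ℤ)+j by omega)]
  have hE : (q:ℂ)^(3*((d:ℤ)+2)*j^2+2*j) = q^(3*(((d+1:ℕ):ℤ)+1)*j^2+2*j) := by
    rw [show (3*((d:ℤ)+2)*j^2+2*j : ℤ) = 3*(((d+1:ℕ):ℤ)+1)*j^2+2*j from by push_cast; ring]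
  rw [hE]
  have d1 := hP (2*M)
  have d2 := hP (((M:ℤ)+j).toNat)
  have d3 := hP (((M:ℤ)-j).toNat)
  field_simp

end St8

theorem statement_8 (ν : ℕ) (hν : 0 < ν) (M : ℕ) (q : ℂ) (h0 : 0 < ‖q‖)
    (h1 : ‖q‖ < 1) :
    (∑' n : Fin ν → ℕ,
      q ^ (3 * ∑ k : Fin ν, (Nsum n k) ^ 2) * qPoch (-q) (q ^ 2) (3 * n ⟨ν - 1, by omega⟩) *
        invPoch (q ^ 6) (q ^ 6) ((M : ℤ) - (Nsum n ⟨0, by omega⟩ : ℤ)) *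
        (∏ k : Fin ν, if (k : ℕ) < ν - 1 then invPoch (q ^ 6) (q ^ 6) (n k : ℤ) else 1) *
        invPoch (q ^ 6) (q ^ 6) (2 * (n ⟨ν - 1, by omega⟩ : ℤ)))
    = qPoch (-q ^ 3) (q ^ 6) M / qPoch (q ^ 6) (q ^ 6) (2 * M) *
        ∑ j ∈ Finset.Icc (-(M : ℤ)) (M : ℤ),
          q ^ (3 * ((ν : ℤ) + 1) * j ^ 2 + 2 * j) * qBinom (q ^ 6) (2 * (M : ℤ)) ((M : ℤ) + j) := by
  obtain ⟨d, rfl⟩ : ∃ d, ν = d + 1 := ⟨ν - 1, by omega⟩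
  have hq0 : q ≠ 0 := by
    intro h
    rw [h] at h0
    simp at h0
  have hL : ∑' n : Fin (d+1) → ℕ, St8.trm q M n = St8.Lfun q d M := by
    rw [St8.Lfun]
    refine tsum_eq_sum ?_
    intro n hn
    simp only [Fintype.mem_piFinset, Finset.mem_range, not_forall, not_lt] at hn
    obtain ⟨i, hi⟩ := hn
    by_contra hne
    have hb := St8.trm_ne_zero_imp hne
    have hsl : n i ≤ ∑ l, n l :=
      Finset.single_le_sum (fun _ _ => Nat.zero_le _) (Finset.mem_univ i)
    omega
  refine Eq.trans (b := St8.Lfun q d M) ?_ ?_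
  · exact hL
  · rw [St8.Lmain hq0 h1 d M]
    exact St8.Rconv hq0 h1 d M
end
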